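/- arXiv:1403.4104 — 7 statements merged into one kernel-verified Lean document; each statement's English description precedes it below -/
import Mathlib

section
/- Let n, s ≥ 1 and let Σ ⊆ ℕⁿ × {1,…,s} be stable under addition of ℕⁿ in the first coordinate (i.e., (α,ℓ) ∈ Σ implies (α+γ,ℓ) ∈ Σ for all γ ∈ ℕⁿ). If Σ satisfies Hironaka's box condition, i.e., the complement (ℕⁿ × {1,…,s}) \ Σ is a finite disjoint union of boxes, then Σ is an echelon, i.e., Σ itself is a finite disjoint union of boxes. -/
/-- A box in `ℕⁿ × {1,…,s}`: the set `{(γ+α, ℓ) : α ∈ ℕⁿ, αᵢ = 0 for all i > j}`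
for some `γ ∈ ℕⁿ`, some `ℓ` and some `0 ≤ j ≤ n` (variables being 1-indexed,
the condition `i > j` reads `j ≤ i` for the 0-indexed `i : Fin n`). -/
def IsBox {n s : ℕ} (B : Set ((Fin n → ℕ) × Fin s)) : Prop :=
  ∃ (γ : Fin n → ℕ) (ℓ : Fin s) (j : ℕ), j ≤ n ∧
    B = {q | ∃ α : Fin n → ℕ, (∀ i : Fin n, j ≤ (i : ℕ) → α i = 0) ∧ q = (γ + α, ℓ)}

/-- A subset of `ℕⁿ × {1,…,s}` is a finite disjoint union of boxes. -/
def IsFinDisjUnionOfBoxes {n s : ℕ} (S : Set ((Fin n → ℕ) × Fin s)) : Prop :=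
  ∃ (m : ℕ) (B : Fin m → Set ((Fin n → ℕ) × Fin s)),
    (∀ k, IsBox (B k)) ∧ (∀ k l, k ≠ l → Disjoint (B k) (B l)) ∧ S = ⋃ k, B k

lemma snoc_add_snoc {n : ℕ} (a b : Fin n → ℕ) (x y : ℕ) :
    (Fin.snoc (a + b) (x + y) : Fin (n + 1) → ℕ) = Fin.snoc a x + Fin.snoc b y := by
  funext i
  refine Fin.lastCases ?_ (fun i => ?_) i <;>
    simp [Fin.snoc_castSucc, Fin.snoc_last]

/-- A finite family of box-or-empty pairwise disjoint sets gives an echelon. -/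
lemma finDisjUnion_of_boxOrEmpty {n s : ℕ} {ι : Type} [Fintype ι]
    (B : ι → Set ((Fin n → ℕ) × Fin s))
    (hb : ∀ k, IsBox (B k) ∨ B k = ∅)
    (hd : ∀ k l, k ≠ l → Disjoint (B k) (B l)) :
    IsFinDisjUnionOfBoxes (⋃ k, B k) := by
  classical
  set κ := {k : ι // (B k).Nonempty} with hκ
  refine ⟨Fintype.card κ, fun i => B ((Fintype.equivFin κ).symm i).1, ?_, ?_, ?_⟩
  · intro i
    rcases hb ((Fintype.equivFin κ).symm i).1 with h | h
    · exact h
    · exact absurd h (Set.nonempty_iff_ne_empty.mp ((Fintype.equivFin κ).symm i).2)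
  · intro i l hne
    refine hd _ _ (fun h => hne ?_)
    have := (Fintype.equivFin κ).symm.injective (Subtype.ext h)
    exact this
  · ext x
    simp only [Set.mem_iUnion]
    constructor
    · rintro ⟨k, hk⟩
      exact ⟨(Fintype.equivFin κ) ⟨k, ⟨x, hk⟩⟩, by simpa using hk⟩
    · rintro ⟨i, hi⟩
      exact ⟨_, hi⟩

/-- The slice of a box along a fixed last coordinate is a box or empty. -/
lemma proj_boxOrEmpty {n s : ℕ} {B : Set ((Fin (n + 1) → ℕ) × Fin s)} (hB : IsBox B) (t : ℕ) :
    IsBox {q : (Fin n → ℕ) × Fin s | ((Fin.snoc q.1 t : Fin (n+1) → ℕ), q.2) ∈ B} ∨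
      {q : (Fin n → ℕ) × Fin s | ((Fin.snoc q.1 t : Fin (n+1) → ℕ), q.2) ∈ B} = ∅ := by
  obtain ⟨γ, ℓ, j, hj, rfl⟩ := hB
  by_cases hjn : j ≤ n
  · by_cases ht : t = γ (Fin.last n)
    · left
      refine ⟨Fin.init γ, ℓ, j, hjn, ?_⟩
      ext ⟨y, l⟩
      simp only [Set.mem_setOf_eq, Prod.mk.injEq]
      constructor
      · rintro ⟨α, hα, h1, h2⟩
        have hlast : α (Fin.last n) = 0 := hα _ (by simp [Fin.val_last]; omega)
        refine ⟨Fin.init α, fun i hi => hα i.castSucc (by simpa using hi), ?_, h2⟩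
        funext i
        have h := congrFun h1 i.castSucc
        simpa [Fin.snoc_castSucc, Fin.init] using h
      · rintro ⟨α', hα', rfl, rfl⟩
        refine ⟨Fin.snoc α' 0, ?_, ?_, rfl⟩
        · intro i hi
          rcases Fin.eq_castSucc_or_eq_last i with ⟨i', rfl⟩ | rfl
          · simp only [Fin.snoc_castSucc]
            exact hα' i' (by simpa using hi)
          · simp
        · funext i
          rcases Fin.eq_castSucc_or_eq_last i with ⟨i', rfl⟩ | rfl
          · simp [Fin.snoc_castSucc, Fin.init]
          · simp [Fin.snoc_last, ht]
    · right
      ext ⟨y, l⟩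
      simp only [Set.mem_setOf_eq, Set.mem_empty_iff_false, iff_false]
      rintro ⟨α, hα, h1⟩
      have hlast : α (Fin.last n) = 0 := hα _ (by simp [Fin.val_last]; omega)
      have h := congrFun (congrArg Prod.fst h1) (Fin.last n)
      simp only [Fin.snoc_last, Pi.add_apply, hlast] at h
      omega
  · -- j = n + 1
    have hj1 : j = n + 1 := le_antisymm hj (by omega)
    by_cases ht : γ (Fin.last n) ≤ t
    · left
      refine ⟨Fin.init γ, ℓ, n, le_refl n, ?_⟩
      ext ⟨y, l⟩
      simp only [Set.mem_setOf_eq, Prod.mk.injEq]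
      constructor
      · rintro ⟨α, hα, h1, h2⟩
        refine ⟨Fin.init α, fun i hi => absurd i.is_lt (by omega), ?_, h2⟩
        funext i
        have h := congrFun h1 i.castSucc
        simpa [Fin.snoc_castSucc, Fin.init] using h
      · rintro ⟨α', hα', rfl, rfl⟩
        refine ⟨Fin.snoc α' (t - γ (Fin.last n)), fun i hi => absurd i.is_lt (by omega), ?_, rfl⟩
        funext i
        rcases Fin.eq_castSucc_or_eq_last i with ⟨i', rfl⟩ | rfl
        · simp [Fin.snoc_castSucc, Fin.init]
        · simp only [Fin.snoc_last, Pi.add_apply]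
          omega
    · right
      ext ⟨y, l⟩
      simp only [Set.mem_setOf_eq, Set.mem_empty_iff_false, iff_false]
      rintro ⟨α, hα, h1⟩
      have h := congrFun (congrArg Prod.fst h1) (Fin.last n)
      simp only [Fin.snoc_last, Pi.add_apply] at h
      omega

/-- Appending a fixed last coordinate to a box yields a box. -/
lemma lift_box {n s : ℕ} {C : Set ((Fin n → ℕ) × Fin s)} (hC : IsBox C) (t : ℕ) :
    IsBox ((fun q : (Fin n → ℕ) × Fin s => ((Fin.snoc q.1 t : Fin (n+1) → ℕ), q.2)) '' C) := by
  obtain ⟨γ, ℓ, j, hj, rfl⟩ := hC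
  refine ⟨Fin.snoc γ t, ℓ, j, hj.trans (Nat.le_succ n), ?_⟩
  ext ⟨x, l⟩
  simp only [Set.mem_image, Set.mem_setOf_eq, Prod.mk.injEq]
  constructor
  · rintro ⟨⟨y, l'⟩, ⟨α, hα, hy⟩, h1, h2⟩
    simp only [Prod.mk.injEq] at hy
    obtain ⟨hy1, hy2⟩ := hy
    subst hy1; subst hy2; subst h1; subst h2
    refine ⟨Fin.snoc α 0, ?_, ?_, rfl⟩
    · intro i hi
      rcases Fin.eq_castSucc_or_eq_last i with ⟨i', rfl⟩ | rfl
      · simp only [Fin.snoc_castSucc]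
        exact hα i' (by simpa using hi)
      · simp
    · funext i
      rcases Fin.eq_castSucc_or_eq_last i with ⟨i', rfl⟩ | rfl
      · simp [Fin.snoc_castSucc]
      · simp [Fin.snoc_last]
  · rintro ⟨α, hα, rfl, rfl⟩
    have hlast : α (Fin.last n) = 0 := hα _ (by simp [Fin.val_last]; omega)
    refine ⟨_,
      ⟨Fin.init α, fun i hi => hα i.castSucc (by simpa using hi), rfl⟩, ?_, rfl⟩
    funext i
    rcases Fin.eq_castSucc_or_eq_last i with ⟨i', rfl⟩ | rfl
    · simp [Fin.snoc_castSucc, Fin.init]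
    · simp [Fin.snoc_last, hlast]

theorem echelon_main : ∀ (n : ℕ) {s : ℕ} (S : Set ((Fin n → ℕ) × Fin s)),
    (∀ p ∈ S, ∀ γ : Fin n → ℕ, (p.1 + γ, p.2) ∈ S) →
    IsFinDisjUnionOfBoxes Sᶜ → IsFinDisjUnionOfBoxes S := by
  intro n
  induction n with
  | zero =>
    intro s S _ _
    classical
    have hy : ∀ y : Fin 0 → ℕ, y = fun i => i.elim0 := fun y => funext fun i => i.elim0
    have hU : S = ⋃ ℓ : Fin s, (S ∩ {q | q.2 = ℓ}) := by
      ext q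
      simp only [Set.mem_iUnion, Set.mem_inter_iff, Set.mem_setOf_eq]
      exact ⟨fun h => ⟨q.2, h, rfl⟩, fun ⟨ℓ, h, _⟩ => h⟩
    rw [hU]
    apply finDisjUnion_of_boxOrEmpty
    · intro ℓ
      by_cases h : ((fun i => i.elim0 : Fin 0 → ℕ), ℓ) ∈ S
      · left
        refine ⟨fun i => i.elim0, ℓ, 0, le_refl 0, ?_⟩
        ext ⟨y, l⟩
        simp only [Set.mem_inter_iff, Set.mem_setOf_eq, Prod.mk.injEq]
        constructor
        · rintro ⟨_, rfl⟩
          exact ⟨fun i => i.elim0, fun i => i.elim0, funext fun i => i.elim0, rfl⟩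
        · rintro ⟨α, _, rfl, rfl⟩
          refine ⟨?_, rfl⟩
          have : (fun i : Fin 0 => i.elim0) + α = fun i : Fin 0 => i.elim0 :=
            funext fun i => i.elim0
          rw [this]; exact h
      · right
        ext ⟨y, l⟩
        simp only [Set.mem_inter_iff, Set.mem_setOf_eq, Set.mem_empty_iff_false, iff_false]
        rintro ⟨hS, rfl⟩
        exact h (by rwa [hy y] at hS)
    · intro k l hne
      rw [Set.disjoint_left]
      rintro q ⟨_, hk⟩ ⟨_, hl⟩
      exact hne (hk ▸ hl ▸ rfl)
  | succ n ih =>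
    intro s S hstab hbox
    classical
    obtain ⟨m, B, hB, hdisj, hcup⟩ := hbox
    choose γb ℓb jb hjb hBeq using hB
    have hcmem : ∀ x, x ∈ Sᶜ ↔ ∃ k, x ∈ B k :=
      fun x => (Set.ext_iff.mp hcup x).trans Set.mem_iUnion
    set T : ℕ := (Finset.univ.sup fun k => γb k (Fin.last n)) + 1 with hT
    set L : Fin s → Prop := fun ℓ => ∃ k, ¬ jb k ≤ n ∧ ℓb k = ℓ with hL
    -- slices
    set St : ℕ → Set ((Fin n → ℕ) × Fin s) :=
      fun t => {q | ((Fin.snoc q.1 t : Fin (n+1) → ℕ), q.2) ∈ S} with hSt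
    have hStStab : ∀ t, ∀ p ∈ St t, ∀ γ : Fin n → ℕ, (p.1 + γ, p.2) ∈ St t := by
      intro t p hp γ
      have h : (Fin.snoc (p.1 + γ) t : Fin (n+1) → ℕ) =
          Fin.snoc p.1 t + Fin.snoc γ 0 := by
        simpa using snoc_add_snoc p.1 γ t 0
      show ((Fin.snoc (p.1 + γ) t : Fin (n+1) → ℕ), p.2) ∈ S
      rw [h]
      exact hstab _ hp _
    have hStCompl : ∀ t, IsFinDisjUnionOfBoxes (St t)ᶜ := by
      intro t
      have hU : (St t)ᶜ = ⋃ k, {q : (Fin n → ℕ) × Fin s |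
          ((Fin.snoc q.1 t : Fin (n+1) → ℕ), q.2) ∈ B k} := by
        ext q
        have : ((Fin.snoc q.1 t : Fin (n+1) → ℕ), q.2) ∈ Sᶜ ↔
            ∃ k, ((Fin.snoc q.1 t : Fin (n+1) → ℕ), q.2) ∈ B k := by
          rw [hcup]; simp
        simpa [hSt, Set.mem_compl_iff, Set.mem_iUnion] using this
      rw [hU]
      apply finDisjUnion_of_boxOrEmpty
      · intro k
        exact proj_boxOrEmpty ⟨γb k, ℓb k, jb k, hjb k, hBeq k⟩ t
      · intro k l hne
        rw [Set.disjoint_left]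
        rintro q hk hl
        exact Set.disjoint_left.mp (hdisj k l hne) hk hl
    have hStE : ∀ t, IsFinDisjUnionOfBoxes (St t) :=
      fun t => ih (St t) (hStStab t) (hStCompl t)
    choose mt Ct hCbox hCdisj hCun using hStE
    have hCmem : ∀ (t : ℕ) x, x ∈ St t ↔ ∃ k, x ∈ Ct t k :=
      fun t x => (Set.ext_iff.mp (hCun t) x).trans Set.mem_iUnion
    -- the final family
    set Fbox : Fin s → Set ((Fin (n+1) → ℕ) × Fin s) := fun ℓ =>
      {q | ∃ α : Fin (n+1) → ℕ, (∀ i : Fin (n+1), n + 1 ≤ (i : ℕ) → α i = 0) ∧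
        q = ((Fin.snoc 0 T : Fin (n+1) → ℕ) + α, ℓ)} with hFbox
    set B' : (Fin s ⊕ (Σ t : Fin T, Fin (mt t))) → Set ((Fin (n+1) → ℕ) × Fin s) :=
      Sum.elim (fun ℓ => if L ℓ then ∅ else Fbox ℓ)
        (fun p => (fun q : (Fin n → ℕ) × Fin s =>
          ((Fin.snoc q.1 (p.1 : ℕ) : Fin (n+1) → ℕ), q.2)) '' Ct (p.1 : ℕ) p.2) with hB'
    have hFboxMem : ∀ ℓ q, q ∈ Fbox ℓ → T ≤ q.1 (Fin.last n) ∧ q.2 = ℓ := by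
      rintro ℓ ⟨x, l⟩ ⟨α, hα, hq⟩
      simp only [Prod.mk.injEq] at hq
      obtain ⟨h1, h2⟩ := hq
      have h3 := congrFun h1 (Fin.last n)
      simp only [Pi.add_apply, Fin.snoc_last] at h3
      exact ⟨by show T ≤ x (Fin.last n); omega, h2⟩
    have hLiftMem : ∀ (t : ℕ) (C : Set ((Fin n → ℕ) × Fin s)) q,
        q ∈ (fun q : (Fin n → ℕ) × Fin s =>
          ((Fin.snoc q.1 t : Fin (n+1) → ℕ), q.2)) '' C → q.1 (Fin.last n) = t := by
      rintro t C q ⟨y, _, rfl⟩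
      simp
    have hinj : ∀ t : ℕ, Function.Injective
        (fun q : (Fin n → ℕ) × Fin s => ((Fin.snoc q.1 t : Fin (n+1) → ℕ), q.2)) := by
      intro t a b hab
      have hab' : ((Fin.snoc a.1 t : Fin (n+1) → ℕ), a.2) =
          ((Fin.snoc b.1 t : Fin (n+1) → ℕ), b.2) := hab
      have h2 := congrArg Prod.snd hab'
      have h3 : a.1 = b.1 := by
        have h4 := congrArg (fun x : (Fin (n+1) → ℕ) × Fin s => Fin.init x.1) hab'
        simpa [Fin.init_snoc] using h4
      exact Prod.ext h3 h2
    have hsup : ∀ k, γb k (Fin.last n) < T := by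
      intro k
      have h := Finset.le_sup (f := fun k => γb k (Fin.last n)) (Finset.mem_univ k)
      exact Nat.lt_succ_of_le h
    have hkey : S = ⋃ k, B' k := by
      ext q
      simp only [Set.mem_iUnion]
      constructor
      · intro hq
        by_cases hTle : T ≤ q.1 (Fin.last n)
        · refine ⟨Sum.inl q.2, ?_⟩
          have hnL : ¬ L q.2 := by
            rintro ⟨k, hk, hℓ⟩
            have hmem : (q.1 + γb k, q.2) ∈ S := hstab q hq (γb k)
            have hmem' : (q.1 + γb k, q.2) ∈ B k := by
              rw [hBeq k]
              refine ⟨q.1, fun i hi => absurd hi (by have := i.is_lt; omega), ?_⟩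
              rw [add_comm q.1 (γb k), hℓ]
            exact ((hcmem _).mpr ⟨k, hmem'⟩) hmem
          have hmem : q ∈ Fbox q.2 := by
            refine ⟨fun i => q.1 i - (Fin.snoc 0 T : Fin (n+1) → ℕ) i,
              fun i hi => absurd i.is_lt (by omega), ?_⟩
            have : (Fin.snoc 0 T : Fin (n+1) → ℕ) +
                (fun i => q.1 i - (Fin.snoc 0 T : Fin (n+1) → ℕ) i) = q.1 := by
              funext i
              simp only [Pi.add_apply]
              rcases Fin.eq_castSucc_or_eq_last i with ⟨i', rfl⟩ | rfl
              · simp [Fin.snoc_castSucc]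
              · simp only [Fin.snoc_last]
                omega
            rw [this]
          simp only [hB', Sum.elim_inl, if_neg hnL]
          exact hmem
        · push_neg at hTle
          have hq' : (Fin.init q.1, q.2) ∈ St (q.1 (Fin.last n)) := by
            show ((Fin.snoc (Fin.init q.1) (q.1 (Fin.last n)) : Fin (n+1) → ℕ), q.2) ∈ S
            rw [Fin.snoc_init_self]
            exact hq
          obtain ⟨k, hk⟩ := (hCmem (q.1 (Fin.last n)) _).mp hq'
          refine ⟨Sum.inr ⟨⟨q.1 (Fin.last n), hTle⟩, k⟩, ?_⟩
          simp only [hB', Sum.elim_inr]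
          refine ⟨(Fin.init q.1, q.2), hk, ?_⟩
          show ((Fin.snoc (Fin.init q.1) (q.1 (Fin.last n)) : Fin (n+1) → ℕ), q.2) = q
          rw [Fin.snoc_init_self]
      · rintro ⟨k, hk⟩
        rcases k with ℓ | ⟨t, k⟩
        · simp only [hB', Sum.elim_inl] at hk
          by_cases hLl : L ℓ
          · rw [if_pos hLl] at hk; exact absurd hk (Set.notMem_empty q)
          · rw [if_neg hLl] at hk
            obtain ⟨hTle, hq2⟩ := hFboxMem ℓ q hk
            by_contra hqS
            obtain ⟨k, hkB⟩ := (hcmem q).mp hqS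
            rw [hBeq k] at hkB
            obtain ⟨β, hβ, hqeq⟩ := hkB
            by_cases hjk : jb k ≤ n
            · have hβlast : β (Fin.last n) = 0 := hβ _ (by simp [Fin.val_last]; omega)
              have h1 := congrFun (congrArg Prod.fst hqeq) (Fin.last n)
              simp only [Pi.add_apply] at h1
              have := hsup k
              omega
            · apply hLl
              refine ⟨k, hjk, ?_⟩
              have := congrArg Prod.snd hqeq
              simp only at this
              rw [← this, hq2]
        · simp only [hB', Sum.elim_inr] at hk
          obtain ⟨y, hy, rfl⟩ := hk
          exact (hCmem (t : ℕ) y).mpr ⟨k, hy⟩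
    rw [hkey]
    apply finDisjUnion_of_boxOrEmpty
    · rintro (ℓ | ⟨t, k⟩)
      · simp only [hB', Sum.elim_inl]
        by_cases hLl : L ℓ
        · right; rw [if_pos hLl]
        · left
          rw [if_neg hLl]
          exact ⟨Fin.snoc 0 T, ℓ, n + 1, le_refl _, rfl⟩
      · simp only [hB', Sum.elim_inr]
        exact Or.inl (lift_box (hCbox (t : ℕ) k) (t : ℕ))
    · rintro (ℓ | ⟨t, k⟩) (ℓ' | ⟨t', k'⟩) hne <;> rw [Set.disjoint_left]
      · rintro q hq hq'
        simp only [hB', Sum.elim_inl] at hq hq'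
        split_ifs at hq hq' with h1 h2
        · exact hq
        · exact hq
        · exact hq'
        · have e1 := (hFboxMem ℓ q hq).2
          have e2 := (hFboxMem ℓ' q hq').2
          exact hne (by rw [← e1, ← e2])
      · rintro q hq hq'
        simp only [hB', Sum.elim_inl] at hq
        simp only [hB', Sum.elim_inr] at hq'
        split_ifs at hq with h1
        · exact hq
        · have e1 := (hFboxMem ℓ q hq).1
          have e2 := hLiftMem (t' : ℕ) _ q hq'
          have := t'.is_lt
          omega
      · rintro q hq hq'
        simp only [hB', Sum.elim_inr] at hq
        simp only [hB', Sum.elim_inl] at hq'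
        split_ifs at hq' with h1
        · exact hq'
        · have e1 := (hFboxMem ℓ' q hq').1
          have e2 := hLiftMem (t : ℕ) _ q hq
          have := t.is_lt
          omega
      · rintro q hq hq'
        simp only [hB', Sum.elim_inr] at hq hq'
        by_cases htt : t = t'
        · subst htt
          have hkk : k ≠ k' := by
            intro h
            exact hne (by rw [h])
          obtain ⟨y, hy, hyq⟩ := hq
          obtain ⟨y', hy', hyq'⟩ := hq'
          have hyy : y = y' := hinj (t : ℕ) (hyq.trans hyq'.symm)
          subst hyy
          exact Set.disjoint_left.mp (hCdisj (t : ℕ) k k' hkk) hy hy'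
        · have e1 := hLiftMem (t : ℕ) _ q hq
          have e2 := hLiftMem (t' : ℕ) _ q hq'
          exact htt (Fin.val_injective (by omega))

/-- Monomial submodules (stable sets) satisfying Hironaka's box condition are echelons. -/
theorem monomial_module_box_condition_implies_echelon
    (n s : ℕ) (hn : 1 ≤ n) (hs : 1 ≤ s) (S : Set ((Fin n → ℕ) × Fin s))
    (hstab : ∀ p ∈ S, ∀ γ : Fin n → ℕ, (p.1 + γ, p.2) ∈ S)
    (hbox : IsFinDisjUnionOfBoxes Sᶜ) :
    IsFinDisjUnionOfBoxes S := by
  exact echelon_main n S hstab hbox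
end

section
/- Let E = {β ∈ ℕ³ : β ≥ (1,1,0) or β ≥ (1,0,1) or β ≥ (0,1,1) componentwise}, the exponent set of the monomial ideal of K[x₁,x₂,x₃] generated by x₁x₂, x₁x₃ and x₂x₃. Then for every permutation σ of {1,2,3}, E is not a finite disjoint union of σ-boxes; that is, E cannot be written as a finite disjoint union of sets of the form {γ + α : α ∈ ℕ³ with α_{σ(i)} = 0 for all i > j}, where γ ∈ ℕ³ and 0 ≤ j ≤ 3. In particular the ideal (x₁x₂, x₁x₃, x₂x₃) is not an echelon for any ordering of the variables. -/
/-- For a permutation `σ` of `{1,2,3}`, a `σ`-box in `ℕ³` is a set of the form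
`{γ + α : α ∈ ℕ³, α_{σ(i)} = 0 for all i > j}` for some `γ ∈ ℕ³` and `0 ≤ j ≤ 3`
(with 0-indexed `i : Fin 3`, the condition `i > j` reads `j ≤ i`). -/
def IsSigmaBox (σ : Equiv.Perm (Fin 3)) (B : Set (Fin 3 → ℕ)) : Prop :=
  ∃ (γ : Fin 3 → ℕ) (j : ℕ), j ≤ 3 ∧
    B = {β | ∃ α : Fin 3 → ℕ, (∀ i : Fin 3, j ≤ (i : ℕ) → α (σ i) = 0) ∧ β = γ + α}

/-- A subset of `ℕ³` is an echelon with respect to `σ` if it is a finite disjoint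
union of `σ`-boxes. -/
def IsSigmaEchelon (σ : Equiv.Perm (Fin 3)) (E : Set (Fin 3 → ℕ)) : Prop :=
  ∃ (m : ℕ) (B : Fin m → Set (Fin 3 → ℕ)),
    (∀ k, IsSigmaBox σ (B k)) ∧ (∀ k l, k ≠ l → Disjoint (B k) (B l)) ∧ E = ⋃ k, B k

lemma memE_iff (β : Fin 3 → ℕ) :
    (β ∈ {β : Fin 3 → ℕ |
      (1 ≤ β 0 ∧ 1 ≤ β 1 ∧ 0 ≤ β 2) ∨
      (1 ≤ β 0 ∧ 0 ≤ β 1 ∧ 1 ≤ β 2) ∨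
      (0 ≤ β 0 ∧ 1 ≤ β 1 ∧ 1 ≤ β 2)}) ↔
    ∃ i j : Fin 3, i ≠ j ∧ 1 ≤ β i ∧ 1 ≤ β j := by
  constructor
  · rintro (⟨h0, h1, -⟩ | ⟨h0, -, h2⟩ | ⟨-, h1, h2⟩)
    · exact ⟨0, 1, by decide, h0, h1⟩
    · exact ⟨0, 2, by decide, h0, h2⟩
    · exact ⟨1, 2, by decide, h1, h2⟩
  · rintro ⟨i, j, hij, hi, hj⟩
    simp only [Set.mem_setOf_eq]
    fin_cases i <;> fin_cases j <;> simp_all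

/-- The exponent set of the monomial ideal `(x₁x₂, x₁x₃, x₂x₃)` is not an echelon
for any ordering of the variables. -/
theorem ideal_xy_xz_yz_not_echelon :
    ∀ σ : Equiv.Perm (Fin 3),
      ¬ IsSigmaEchelon σ
        {β : Fin 3 → ℕ |
          (1 ≤ β 0 ∧ 1 ≤ β 1 ∧ 0 ≤ β 2) ∨
          (1 ≤ β 0 ∧ 0 ≤ β 1 ∧ 1 ≤ β 2) ∨
          (0 ≤ β 0 ∧ 1 ≤ β 1 ∧ 1 ≤ β 2)} := by
  intro σ
  set S : Set (Fin 3 → ℕ) := {β : Fin 3 → ℕ |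
          (1 ≤ β 0 ∧ 1 ≤ β 1 ∧ 0 ≤ β 2) ∨
          (1 ≤ β 0 ∧ 0 ≤ β 1 ∧ 1 ≤ β 2) ∨
          (0 ≤ β 0 ∧ 1 ≤ β 1 ∧ 1 ≤ β 2)} with hS
  rintro ⟨m, B, hbox, hdisj, hE⟩
  have tri : ∀ i : Fin 3, i = σ 0 ∨ i = σ 1 ∨ i = σ 2 := by
    intro i
    have h3 : σ.symm i = 0 ∨ σ.symm i = 1 ∨ σ.symm i = 2 := by
      generalize σ.symm i = t; fin_cases t <;> simp
    rcases h3 with h | h | h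
    · left; rw [← σ.apply_symm_apply i, h]
    · right; left; rw [← σ.apply_symm_apply i, h]
    · right; right; rw [← σ.apply_symm_apply i, h]
  have hne01 : σ 0 ≠ σ 1 := fun h => absurd (σ.injective h) (by decide)
  have hne02 : σ 0 ≠ σ 2 := fun h => absurd (σ.injective h) (by decide)
  have hne12 : σ 1 ≠ σ 2 := fun h => absurd (σ.injective h) (by decide)
  -- Key step: there is a full box whose corner γ has γ a' ≤ 1 and γ b' = 0.
  have step : ∀ a' b' : Fin 3, a' ≠ b' → a' ≠ σ 2 → b' ≠ σ 2 →
      ∃ (k : Fin m) (γ : Fin 3 → ℕ),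
        B k = {β | ∀ i, γ i ≤ β i} ∧ γ a' ≤ 1 ∧ γ b' = 0 := by
    intro a' b' hab hac hbc
    set p : ℕ → Fin 3 → ℕ :=
      fun n i => if i = a' then 1 else if i = σ 2 then n + 1 else 0 with hp
    have hpa : ∀ n, p n a' = 1 := by intro n; simp [hp]
    have hpb : ∀ n, p n b' = 0 := by intro n; simp [hp, Ne.symm hab, hbc]
    have hpc : ∀ n, p n (σ 2) = n + 1 := by intro n; simp [hp, Ne.symm hac]
    have hpmem : ∀ n, p n ∈ S := by
      intro n
      rw [hS]
      exact (memE_iff _).mpr ⟨a', σ 2, hac, by rw [hpa], by rw [hpc]; omega⟩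
    have hchoice : ∀ n : ℕ, ∃ k, p n ∈ B k := by
      intro n
      have h := hpmem n
      rw [hE] at h
      exact Set.mem_iUnion.mp h
    choose f hf using hchoice
    obtain ⟨n1, n2, hne, he⟩ := Finite.exists_ne_map_eq_of_infinite f
    obtain ⟨γ, j, hj3, hBeq⟩ := hbox (f n1)
    have h1 : p n1 ∈ B (f n1) := hf n1
    have h2 : p n2 ∈ B (f n1) := he ▸ hf n2
    by_cases hj : j = 3
    · subst hj
      have hful : B (f n1) = {β | ∀ i, γ i ≤ β i} := by
        rw [hBeq]; ext β
        simp only [Set.mem_setOf_eq]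
        constructor
        · rintro ⟨α, -, rfl⟩ i; exact Nat.le_add_right _ _
        · intro hβ
          refine ⟨fun i => β i - γ i, fun i hi => absurd i.isLt (by omega), ?_⟩
          funext i
          have := hβ i
          simp only [Pi.add_apply]
          omega
      rw [hful] at h1
      refine ⟨f n1, γ, hful, ?_, ?_⟩
      · have := h1 a'; rw [hpa] at this; exact this
      · have := h1 b'; rw [hpb] at this; omega
    · exfalso
      have hc : ∀ β ∈ B (f n1), β (σ 2) = γ (σ 2) := by
        intro β hβ
        rw [hBeq] at hβ
        obtain ⟨α, hα, rfl⟩ := hβ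
        have h2 : α (σ 2) = 0 := hα 2 (by norm_num; omega)
        simp [Pi.add_apply, h2]
      have e1 := hc _ h1
      have e2 := hc _ h2
      rw [hpc] at e1 e2
      omega
  obtain ⟨k, γ, hk, hka, hkb⟩ := step (σ 0) (σ 1) hne01 hne02 hne12
  obtain ⟨l, δ, hl, hlb, hla⟩ := step (σ 1) (σ 0) hne01.symm hne12 hne02
  have hsubE : ∀ k, B k ⊆ S := by
    intro k; rw [hE]; exact Set.subset_iUnion B k
  have notboth : ∀ (k : Fin m) (γ : Fin 3 → ℕ), B k = {β | ∀ i, γ i ≤ β i} →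
      ¬ (γ (σ 0) = 0 ∧ γ (σ 1) = 0) := by
    rintro k γ hBk ⟨h0, h1⟩
    have hγ : γ ∈ B k := by rw [hBk]; exact fun i => le_refl _
    have hγE := hsubE k hγ
    rw [hS] at hγE
    obtain ⟨i, jj, hij, hi, hj⟩ := (memE_iff γ).mp hγE
    have hi2 : i = σ 2 := by
      rcases tri i with h | h | h
      · subst h; omega
      · subst h; omega
      · exact h
    have hj2 : jj = σ 2 := by
      rcases tri jj with h | h | h
      · subst h; omega
      · subst h; omega
      · exact h
    exact hij (hi2.trans hj2.symm)
  by_cases hkl : k = l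
  · subst hkl
    have h1 : ∀ i, γ i ≤ δ i := by
      have hδ : δ ∈ B k := by rw [hl]; exact fun i => le_refl _
      rw [hk] at hδ; exact hδ
    exact notboth k γ hk ⟨by have := h1 (σ 0); omega, hkb⟩
  · set w : Fin 3 → ℕ :=
      fun i => if i = σ 2 then max (γ (σ 2)) (δ (σ 2)) else 1 with hw
    have hwk : w ∈ B k := by
      rw [hk]
      intro i
      rcases tri i with h | h | h <;> subst h <;>
        simp [hw, Ne.symm hne02, Ne.symm hne12] <;> omega
    have hwl : w ∈ B l := by
      rw [hl]
      intro i
      rcases tri i with h | h | h <;> subst h <;>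
        simp [hw, Ne.symm hne02, Ne.symm hne12] <;> omega
    exact Set.disjoint_left.mp (hdisj k l hkl) hwk hwl
end

section
/- Let K be a field, n, s ≥ 1, < a monomial order on ℕⁿ × {1,…,s}, and I a submodule of K[[x₁,…,xₙ]]^s. Then K[[x]]^s = I ⊕ co(I): every f ∈ K[[x]]^s can be written uniquely as f = g + h with g ∈ I and h ∈ co(I). -/
open MvPowerSeries

/-- A monomial order on `(Fin n →₀ ℕ) × Fin s`. -/
structure MonOrder (n s : ℕ) where
  lt : ((Fin n →₀ ℕ) × Fin s) → ((Fin n →₀ ℕ) × Fin s) → Prop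
  trichotomous : ∀ a b, lt a b ∨ a = b ∨ lt b a
  trans : ∀ a b c, lt a b → lt b c → lt a c
  add_compat : ∀ a b (γ : Fin n →₀ ℕ), lt a b → lt (a.1 + γ, a.2) (b.1 + γ, b.2)
  zero_min : ∀ (α : Fin n →₀ ℕ) (ℓ : Fin s), (0 : Fin n →₀ ℕ) = α ∨ lt (0, ℓ) (α, ℓ)
  wf : WellFounded lt

variable {K : Type*} [Field K] {n s : ℕ}

/-- Support of a power series vector. -/
def vsupp (g : Fin s → MvPowerSeries (Fin n) K) : Set ((Fin n →₀ ℕ) × Fin s) :=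
  {p | MvPowerSeries.coeff p.1 (g p.2) ≠ 0}

/-- The monomial vector `x^α · e_ℓ`. -/
noncomputable def monVec (K : Type*) [Field K] {n s : ℕ} (α : Fin n →₀ ℕ) (ℓ : Fin s) :
    Fin s → MvPowerSeries (Fin n) K :=
  Pi.single ℓ (MvPowerSeries.monomial α (1 : K))

/-- `(α,ℓ)` is the exponent of the initial monomial vector of `g`. -/
def IsInitial (o : MonOrder n s) (g : Fin s → MvPowerSeries (Fin n) K)
    (p : (Fin n →₀ ℕ) × Fin s) : Prop :=
  p ∈ vsupp g ∧ ∀ q ∈ vsupp g, q ≠ p → o.lt p q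

/-- The initial module of a submodule `I` of `K[[x]]^s`. -/
noncomputable def inMod (o : MonOrder n s)
    (I : Submodule (MvPowerSeries (Fin n) K) (Fin s → MvPowerSeries (Fin n) K)) :
    Submodule (MvPowerSeries (Fin n) K) (Fin s → MvPowerSeries (Fin n) K) :=
  Submodule.span _ {v | ∃ g ∈ I, g ≠ 0 ∧ ∃ p, IsInitial o g p ∧ v = monVec K p.1 p.2}

/-- The canonical direct monomial complement of `in(I)`. -/
def coMod (o : MonOrder n s)
    (I : Submodule (MvPowerSeries (Fin n) K) (Fin s → MvPowerSeries (Fin n) K)) :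
    Set (Fin s → MvPowerSeries (Fin n) K) :=
  {h | ∀ p ∈ vsupp h, monVec K p.1 p.2 ∉ inMod o I}

/-! ### Auxiliary material -/

/-- A partially well-ordered set has a finite dominating subset. -/
lemma isPWO_exists_dominating {α : Type*} [Preorder α] {S : Set α} (h : S.IsPWO) :
    ∃ F : Finset α, ↑F ⊆ S ∧ ∀ x ∈ S, ∃ y ∈ F, y ≤ x := by
  classical
  by_contra hc
  push_neg at hc
  choose x hxS hx using hc
  let step : {F : Finset α // ↑F ⊆ S} → {F : Finset α // ↑F ⊆ S} := fun F =>
    ⟨insert (x F.1 F.2) F.1, by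
      rw [Finset.coe_insert]
      exact Set.insert_subset (hxS _ _) F.2⟩
  let seq : ℕ → {F : Finset α // ↑F ⊆ S} := fun k => step^[k] ⟨∅, by simp⟩
  have hseq : ∀ k, seq (k + 1) = step (seq k) := fun k => Function.iterate_succ_apply' _ _ _
  let f : ℕ → α := fun k => x (seq k).1 (seq k).2
  have hfS : ∀ k, f k ∈ S := fun k => hxS _ _
  have hmem : ∀ m k, f m ∈ (seq (m + 1 + k)).1 := by
    intro m k
    induction k with
    | zero => rw [hseq]; exact Finset.mem_insert_self _ _
    | succ k ih =>
        have hmk : m + 1 + (k + 1) = (m + 1 + k) + 1 := by ring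
        rw [hmk, hseq]
        exact Finset.mem_insert_of_mem ih
  obtain ⟨m, m', hmm', hle⟩ := h (fun k => ⟨f k, hfS k⟩)
  obtain ⟨k, rfl⟩ : ∃ k, m' = m + 1 + k := ⟨m' - (m + 1), by omega⟩
  exact hx (seq (m + 1 + k)).1 (seq (m + 1 + k)).2 (f m) (hmem m k) hle

lemma MonOrder.not_lt_self (o : MonOrder n s) (a : (Fin n →₀ ℕ) × Fin s) : ¬ o.lt a a := by
  intro h
  obtain ⟨b, hb, hmin⟩ := o.wf.has_min {a} ⟨a, rfl⟩
  rw [Set.mem_singleton_iff] at hb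
  subst hb
  exact hmin b rfl h

lemma vsupp_monVec (α : Fin n →₀ ℕ) (ℓ : Fin s) :
    vsupp (monVec K α ℓ) = {(α, ℓ)} := by
  ext p
  simp only [vsupp, monVec, Set.mem_setOf_eq, Set.mem_singleton_iff]
  constructor
  · intro hp
    by_cases h2 : p.2 = ℓ
    · rw [h2, Pi.single_eq_same, MvPowerSeries.coeff_monomial] at hp
      by_cases h1 : p.1 = α
      · exact Prod.ext h1 h2
      · simp [h1] at hp
    · rw [Pi.single_eq_of_ne h2] at hp
      simp at hp
  · rintro rfl
    simp

lemma exists_isInitial (o : MonOrder n s) {u : Fin s → MvPowerSeries (Fin n) K} (hu : u ≠ 0) :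
    ∃ p, IsInitial o u p := by
  have hne : (vsupp u).Nonempty := by
    by_contra h
    rw [Set.not_nonempty_iff_eq_empty] at h
    apply hu
    funext ℓ
    show u ℓ = 0
    apply MvPowerSeries.ext
    intro d
    rw [map_zero]
    by_contra hd
    exact Set.eq_empty_iff_forall_notMem.mp h (d, ℓ) hd
  obtain ⟨p, hp, hmin⟩ := o.wf.has_min (vsupp u) hne
  refine ⟨p, hp, fun q hq hne' => ?_⟩
  rcases o.trichotomous p q with h | h | h
  · exact h
  · exact absurd h.symm hne'
  · exact absurd h (hmin q hq)

/-- Divisibility of monomial positions. -/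
def divP (q b : (Fin n →₀ ℕ) × Fin s) : Prop := q.2 = b.2 ∧ q.1 ≤ b.1

lemma span_divisor (T : Set ((Fin n →₀ ℕ) × Fin s))
    {v : Fin s → MvPowerSeries (Fin n) K}
    (hv : v ∈ Submodule.span (MvPowerSeries (Fin n) K)
      {w | ∃ q ∈ T, w = monVec K q.1 q.2}) :
    ∀ p ∈ vsupp v, ∃ q ∈ T, divP q p := by
  induction hv using Submodule.span_induction with
  | mem w hw =>
      obtain ⟨q, hq, rfl⟩ := hw
      intro p hp
      rw [vsupp_monVec, Set.mem_singleton_iff] at hp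
      refine ⟨q, hq, ?_, ?_⟩
      · rw [hp]
      · rw [hp]
  | zero =>
      intro p hp
      exact absurd (show MvPowerSeries.coeff p.1 ((0 : Fin s → MvPowerSeries (Fin n) K) p.2) = 0 by simp) hp
  | add x y hx hy ihx ihy =>
      intro p hp
      have hp' : MvPowerSeries.coeff p.1 (x p.2) + MvPowerSeries.coeff p.1 (y p.2) ≠ 0 := by
        simpa [vsupp] using hp
      by_cases h : MvPowerSeries.coeff p.1 (x p.2) = 0
      · refine ihy p fun h0 => hp' ?_
        rw [h, h0, add_zero]
      · exact ihx p h
  | smul a x hx ih =>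
      intro p hp
      have hp' : MvPowerSeries.coeff p.1 (a * x p.2) ≠ 0 := hp
      rw [MvPowerSeries.coeff_mul] at hp'
      obtain ⟨de, hde, hne0⟩ := Finset.exists_ne_zero_of_sum_ne_zero hp'
      have h2 : MvPowerSeries.coeff de.2 (x p.2) ≠ 0 := fun h0 => hne0 (by rw [h0, mul_zero])
      obtain ⟨q, hq, hdiv⟩ := ih (de.2, p.2) h2
      refine ⟨q, hq, hdiv.1, le_trans hdiv.2 ?_⟩
      calc de.2 ≤ de.1 + de.2 := le_add_self
        _ = p.1 := Finset.HasAntidiagonal.mem_antidiagonal.mp hde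

lemma exists_normalized (o : MonOrder n s)
    {I : Submodule (MvPowerSeries (Fin n) K) (Fin s → MvPowerSeries (Fin n) K)}
    {q : (Fin n →₀ ℕ) × Fin s} (hq : ∃ g ∈ I, g ≠ 0 ∧ IsInitial o g q) :
    ∃ u, u ∈ I ∧ IsInitial o u q ∧ MvPowerSeries.coeff q.1 (u q.2) = 1 := by
  obtain ⟨g, hgI, _hg0, hginit⟩ := hq
  have hc0 : MvPowerSeries.coeff q.1 (g q.2) ≠ 0 := hginit.1
  refine ⟨(MvPowerSeries.C (σ := Fin n) (MvPowerSeries.coeff q.1 (g q.2))⁻¹) • g,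
    I.smul_mem _ hgI, ?_, ?_⟩
  · have hsupp : vsupp ((MvPowerSeries.C (σ := Fin n) (MvPowerSeries.coeff q.1 (g q.2))⁻¹) • g)
        = vsupp g := by
      ext p
      simp only [vsupp, Set.mem_setOf_eq, Pi.smul_apply, smul_eq_mul,
        MvPowerSeries.coeff_C_mul]
      constructor
      · intro h h0
        exact h (by rw [h0, mul_zero])
      · intro h
        exact mul_ne_zero (inv_ne_zero hc0) h
    constructor
    · rw [hsupp]; exact hginit.1
    · intro p hp hne
      rw [hsupp] at hp
      exact hginit.2 p hp hne
  · show MvPowerSeries.coeff q.1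
      (MvPowerSeries.C (σ := Fin n) (MvPowerSeries.coeff q.1 (g q.2))⁻¹ * g q.2) = 1
    rw [MvPowerSeries.coeff_C_mul, inv_mul_cancel₀ hc0]

/-! ### The division construction -/

open scoped Classical

/-- Positions divisible by an element of `Fa`. -/
def Dset (Fa : Finset ((Fin n →₀ ℕ) × Fin s)) : Set ((Fin n →₀ ℕ) × Fin s) :=
  {b | ∃ q ∈ Fa, divP q b}

/-- The designated divisor. -/
noncomputable def pickD (Fa : Finset ((Fin n →₀ ℕ) × Fin s)) (b : (Fin n →₀ ℕ) × Fin s) :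
    (Fin n →₀ ℕ) × Fin s :=
  if h : b ∈ Dset Fa then h.choose else b

lemma pickD_spec {Fa : Finset ((Fin n →₀ ℕ) × Fin s)} {b : (Fin n →₀ ℕ) × Fin s}
    (hb : b ∈ Dset Fa) : pickD Fa b ∈ Fa ∧ divP (pickD Fa b) b := by
  rw [pickD, dif_pos hb]
  exact ⟨hb.choose_spec.1, hb.choose_spec.2⟩

variable (K) in
/-- The inner sum of the recursion. -/
noncomputable def Sfun (o : MonOrder n s) (Fa : Finset ((Fin n →₀ ℕ) × Fin s))
    (G : ((Fin n →₀ ℕ) × Fin s) → (Fin s → MvPowerSeries (Fin n) K))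
    (b : (Fin n →₀ ℕ) × Fin s) (rec : ∀ b', o.lt b' b → K) : K :=
  ∑ q ∈ Fa, ∑ de ∈ Finset.HasAntidiagonal.antidiagonal b.1,
    if h : o.lt (q.1 + de.1, q.2) b then
      (if pickD Fa (q.1 + de.1, q.2) = q then rec (q.1 + de.1, q.2) h else 0)
        * MvPowerSeries.coeff de.2 (G q b.2)
    else 0

/-- The coefficients of the multiplier series, by well-founded recursion. -/
noncomputable def cfun (o : MonOrder n s) (Fa : Finset ((Fin n →₀ ℕ) × Fin s))
    (G : ((Fin n →₀ ℕ) × Fin s) → (Fin s → MvPowerSeries (Fin n) K))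
    (f : Fin s → MvPowerSeries (Fin n) K) : ((Fin n →₀ ℕ) × Fin s) → K :=
  o.wf.fix fun b rec =>
    if b ∈ Dset Fa then MvPowerSeries.coeff b.1 (f b.2) - Sfun K o Fa G b rec else 0

lemma cfun_eq (o : MonOrder n s) (Fa : Finset ((Fin n →₀ ℕ) × Fin s))
    (G : ((Fin n →₀ ℕ) × Fin s) → (Fin s → MvPowerSeries (Fin n) K))
    (f : Fin s → MvPowerSeries (Fin n) K) (b : (Fin n →₀ ℕ) × Fin s) :
    cfun o Fa G f b =
      if b ∈ Dset Fa then
        MvPowerSeries.coeff b.1 (f b.2) - Sfun K o Fa G b (fun b' _ => cfun o Fa G f b')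
      else 0 :=
  o.wf.fix_eq _ b

/-- The multiplier series. -/
noncomputable def Aser (o : MonOrder n s) (Fa : Finset ((Fin n →₀ ℕ) × Fin s))
    (G : ((Fin n →₀ ℕ) × Fin s) → (Fin s → MvPowerSeries (Fin n) K))
    (f : Fin s → MvPowerSeries (Fin n) K) (q : (Fin n →₀ ℕ) × Fin s) :
    MvPowerSeries (Fin n) K :=
  fun d => if pickD Fa (q.1 + d, q.2) = q then cfun o Fa G f (q.1 + d, q.2) else 0

/-- The component of `f` in `I`. -/
noncomputable def gfun (o : MonOrder n s) (Fa : Finset ((Fin n →₀ ℕ) × Fin s))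
    (G : ((Fin n →₀ ℕ) × Fin s) → (Fin s → MvPowerSeries (Fin n) K))
    (f : Fin s → MvPowerSeries (Fin n) K) : Fin s → MvPowerSeries (Fin n) K :=
  ∑ q ∈ Fa, Aser o Fa G f q • G q

lemma coeff_gfun (o : MonOrder n s) (Fa : Finset ((Fin n →₀ ℕ) × Fin s))
    (G : ((Fin n →₀ ℕ) × Fin s) → (Fin s → MvPowerSeries (Fin n) K))
    (f : Fin s → MvPowerSeries (Fin n) K)
    (hG : ∀ q ∈ Fa, IsInitial o (G q) q ∧ MvPowerSeries.coeff q.1 (G q q.2) = 1)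
    {b : (Fin n →₀ ℕ) × Fin s} (hb : b ∈ Dset Fa) :
    MvPowerSeries.coeff b.1 (gfun o Fa G f b.2) = MvPowerSeries.coeff b.1 (f b.2) := by
  have hq0 := pickD_spec hb
  have expand : MvPowerSeries.coeff b.1 (gfun o Fa G f b.2)
      = ∑ q ∈ Fa, ∑ de ∈ Finset.HasAntidiagonal.antidiagonal b.1,
          (if pickD Fa (q.1 + de.1, q.2) = q then cfun o Fa G f (q.1 + de.1, q.2) else 0)
            * MvPowerSeries.coeff de.2 (G q b.2) := by
    rw [gfun, Finset.sum_apply, map_sum]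
    refine Finset.sum_congr rfl fun q hq => ?_
    rw [Pi.smul_apply, smul_eq_mul, MvPowerSeries.coeff_mul]
    rfl
  have hsplit : ∀ q ∈ Fa, ∀ de ∈ Finset.HasAntidiagonal.antidiagonal b.1,
      (if pickD Fa (q.1 + de.1, q.2) = q then cfun o Fa G f (q.1 + de.1, q.2) else 0)
        * MvPowerSeries.coeff de.2 (G q b.2)
      = (if h : o.lt (q.1 + de.1, q.2) b then
            (if pickD Fa (q.1 + de.1, q.2) = q then cfun o Fa G f (q.1 + de.1, q.2) else 0)
              * MvPowerSeries.coeff de.2 (G q b.2)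
          else 0)
        + (if (¬ o.lt (q.1 + de.1, q.2) b) ∧ (de.2, b.2) = q ∧ pickD Fa b = q
            then cfun o Fa G f b else 0) := by
    intro q hq de hde
    by_cases hlt : o.lt (q.1 + de.1, q.2) b
    · rw [dif_pos hlt, if_neg (show ¬((¬ o.lt (q.1 + de.1, q.2) b) ∧ (de.2, b.2) = q ∧
        pickD Fa b = q) from fun hcond => hcond.1 hlt), add_zero]
    · rw [dif_neg hlt, zero_add]
      by_cases hzero : MvPowerSeries.coeff de.2 (G q b.2) = 0
      · rw [hzero, mul_zero, if_neg]
        rintro ⟨-, rfl, -⟩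
        have h1 := (hG _ hq).2
        rw [h1] at hzero
        exact one_ne_zero hzero
      · have hmem : (de.2, b.2) ∈ vsupp (G q) := hzero
        rcases eq_or_ne ((de.2, b.2) : (Fin n →₀ ℕ) × Fin s) q with heq | hne
        · subst heq
          have hcoeff : MvPowerSeries.coeff de.2 (G (de.2, b.2) b.2) = 1 := (hG _ hq).2
          have hqb : (((de.2, b.2) : (Fin n →₀ ℕ) × Fin s).1 + de.1,
              ((de.2, b.2) : (Fin n →₀ ℕ) × Fin s).2) = b := by
            refine Prod.ext ?_ rfl
            show de.2 + de.1 = b.1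
            rw [add_comm]
            exact Finset.HasAntidiagonal.mem_antidiagonal.mp hde
          rw [hqb, hcoeff, mul_one]
          by_cases hpick : pickD Fa b = ((de.2, b.2) : (Fin n →₀ ℕ) × Fin s)
          · rw [if_pos hpick, if_pos ⟨o.not_lt_self b, rfl, hpick⟩]
          · rw [if_neg hpick, if_neg fun hcond => hpick hcond.2.2]
        · exfalso
          have hlt2 := o.add_compat q (de.2, b.2) de.1 ((hG q hq).1.2 (de.2, b.2) hmem hne)
          apply hlt
          have hfst : (((de.2, b.2) : (Fin n →₀ ℕ) × Fin s).1 + de.1,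
              ((de.2, b.2) : (Fin n →₀ ℕ) × Fin s).2) = b := by
            refine Prod.ext ?_ rfl
            show de.2 + de.1 = b.1
            rw [add_comm]
            exact Finset.HasAntidiagonal.mem_antidiagonal.mp hde
          rwa [hfst] at hlt2
  have hdiag : (∑ q ∈ Fa, ∑ de ∈ Finset.HasAntidiagonal.antidiagonal b.1,
      if (¬ o.lt (q.1 + de.1, q.2) b) ∧ (de.2, b.2) = q ∧ pickD Fa b = q
        then cfun o Fa G f b else 0) = cfun o Fa G f b := by
    rw [Finset.sum_eq_single (pickD Fa b)]
    · rw [Finset.sum_eq_single ((b.1 - (pickD Fa b).1, (pickD Fa b).1) :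
        (Fin n →₀ ℕ) × (Fin n →₀ ℕ))]
      · rw [if_pos]
        refine ⟨?_, ?_, rfl⟩
        · have hpt : ((pickD Fa b).1 + (b.1 - (pickD Fa b).1), (pickD Fa b).2) = b := by
            refine Prod.ext ?_ hq0.2.1
            show (pickD Fa b).1 + (b.1 - (pickD Fa b).1) = b.1
            rw [add_comm]
            exact tsub_add_cancel_of_le hq0.2.2
          rw [hpt]
          exact o.not_lt_self b
        · exact Prod.ext rfl hq0.2.1.symm
      · intro de hde hne
        rw [if_neg]
        rintro ⟨-, h2, -⟩
        apply hne
        have hsnd : de.2 = (pickD Fa b).1 := congrArg Prod.fst h2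
        have hfst : de.1 = b.1 - (pickD Fa b).1 := by
          have hmem' := Finset.HasAntidiagonal.mem_antidiagonal.mp hde
          have hcc : de.1 + (pickD Fa b).1 = (b.1 - (pickD Fa b).1) + (pickD Fa b).1 := by
            rw [tsub_add_cancel_of_le hq0.2.2, ← hsnd]
            exact hmem'
          exact add_right_cancel hcc
        exact Prod.ext hfst hsnd
      · intro h
        exact absurd (Finset.HasAntidiagonal.mem_antidiagonal.mpr (tsub_add_cancel_of_le hq0.2.2)) h
    · intro q _ hne
      refine Finset.sum_eq_zero fun de _ => ?_
      rw [if_neg]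
      rintro ⟨-, -, h3⟩
      exact hne h3.symm
    · intro h
      exact absurd hq0.1 h
  rw [expand,
    Finset.sum_congr rfl fun q hq => Finset.sum_congr rfl fun de hde => hsplit q hq de hde]
  simp only [Finset.sum_add_distrib]
  rw [hdiag]
  have hc : cfun o Fa G f b
      = MvPowerSeries.coeff b.1 (f b.2) - ∑ q ∈ Fa, ∑ de ∈ Finset.HasAntidiagonal.antidiagonal b.1,
          (if h : o.lt (q.1 + de.1, q.2) b then
            (if pickD Fa (q.1 + de.1, q.2) = q then cfun o Fa G f (q.1 + de.1, q.2) else 0)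
              * MvPowerSeries.coeff de.2 (G q b.2)
          else 0) := by
    rw [cfun_eq, if_pos hb]
    rfl
  rw [hc]
  ring

theorem stmt2 (hn : 1 ≤ n) (hs : 1 ≤ s) (o : MonOrder n s)
    (I : Submodule (MvPowerSeries (Fin n) K) (Fin s → MvPowerSeries (Fin n) K)) :
    ∀ f : Fin s → MvPowerSeries (Fin n) K,
      ∃ g h, g ∈ I ∧ h ∈ coMod o I ∧ f = g + h ∧
        ∀ g' h', g' ∈ I → h' ∈ coMod o I → f = g' + h' → g' = g ∧ h' = h := by
  intro f
  classical
  set T : Set ((Fin n →₀ ℕ) × Fin s) := {p | ∃ g ∈ I, g ≠ 0 ∧ IsInitial o g p} with hT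
  have hdick : ∀ ℓ : Fin s, ∃ F : Finset (Fin n →₀ ℕ), ↑F ⊆ {α | ((α, ℓ) : _ × _) ∈ T} ∧
      ∀ x ∈ {α | ((α, ℓ) : _ × _) ∈ T}, ∃ y ∈ F, y ≤ x :=
    fun ℓ => isPWO_exists_dominating (Set.isPWO_of_wellQuasiOrderedLE _)
  choose Fl hFl1 hFl2 using hdick
  set Fa : Finset ((Fin n →₀ ℕ) × Fin s) :=
    Finset.univ.biUnion (fun ℓ => (Fl ℓ).image (fun α => (α, ℓ))) with hFa
  have hFaT : ∀ q ∈ Fa, q ∈ T := by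
    intro q hq
    simp only [hFa, Finset.mem_biUnion, Finset.mem_image, Finset.mem_univ, true_and] at hq
    obtain ⟨ℓ, α, hα, rfl⟩ := hq
    exact hFl1 ℓ hα
  have hdom : ∀ p ∈ T, ∃ q ∈ Fa, divP q p := by
    intro p hp
    obtain ⟨y, hy, hle⟩ := hFl2 p.2 p.1 hp
    refine ⟨(y, p.2), ?_, rfl, hle⟩
    simp only [hFa, Finset.mem_biUnion, Finset.mem_image, Finset.mem_univ, true_and]
    exact ⟨p.2, y, hy, rfl⟩
  have hGex : ∀ q ∈ Fa, ∃ u, u ∈ I ∧ IsInitial o u q ∧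
      MvPowerSeries.coeff q.1 (u q.2) = 1 :=
    fun q hq => exists_normalized o (hFaT q hq)
  set G : ((Fin n →₀ ℕ) × Fin s) → (Fin s → MvPowerSeries (Fin n) K) := fun q =>
    if h : ∃ u, u ∈ I ∧ IsInitial o u q ∧ MvPowerSeries.coeff q.1 (u q.2) = 1
    then h.choose else 0 with hGdef
  have hG : ∀ q ∈ Fa, G q ∈ I ∧ IsInitial o (G q) q ∧
      MvPowerSeries.coeff q.1 (G q q.2) = 1 := by
    intro q hq
    have h := hGex q hq
    have hGq : G q = h.choose := by
      simp only [hGdef]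
      exact dif_pos h
    rw [hGq]
    exact h.choose_spec
  set g := gfun o Fa G f with hgdef
  have hgI : g ∈ I := by
    rw [hgdef, gfun]
    exact Submodule.sum_mem I fun q hq => Submodule.smul_mem I _ ((hG q hq).1)
  have hkey : ∀ b ∈ Dset Fa,
      MvPowerSeries.coeff b.1 (g b.2) = MvPowerSeries.coeff b.1 (f b.2) :=
    fun b hb => coeff_gfun o Fa G f (fun q hq => (hG q hq).2) hb
  have hTmon : {v | ∃ g ∈ I, g ≠ 0 ∧ ∃ p, IsInitial o g p ∧ v = monVec K p.1 p.2}
      = {w | ∃ q ∈ T, w = monVec K q.1 q.2} := by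
    ext w
    constructor
    · rintro ⟨u, huI, hu0, p', hinit, rfl⟩
      exact ⟨p', ⟨u, huI, hu0, hinit⟩, rfl⟩
    · rintro ⟨q, ⟨u, huI, hu0, hinit⟩, rfl⟩
      exact ⟨u, huI, hu0, q, hinit, rfl⟩
  have hco : (f - g) ∈ coMod o I := by
    intro p hp hmemIn
    rw [inMod, hTmon] at hmemIn
    obtain ⟨q, hqT, hqp⟩ := span_divisor T hmemIn p (by rw [vsupp_monVec]; rfl)
    obtain ⟨q', hq'Fa, hq'q⟩ := hdom q hqT
    have hpD : p ∈ Dset Fa := ⟨q', hq'Fa, hq'q.1.trans hqp.1, hq'q.2.trans hqp.2⟩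
    have h0 : MvPowerSeries.coeff p.1 ((f - g) p.2) = 0 := by
      rw [Pi.sub_apply, map_sub, hkey p hpD, sub_self]
    exact hp h0
  refine ⟨g, f - g, hgI, hco, by abel, ?_⟩
  intro g' h' hg'I hh'co heq
  by_cases hzero : g' - g = 0
  · have hg'g : g' = g := sub_eq_zero.mp hzero
    refine ⟨hg'g, ?_⟩
    have heq2 : f = g + h' := by rw [heq, hg'g]
    rw [heq2]
    abel
  · exfalso
    obtain ⟨p, hpinit⟩ := exists_isInitial o hzero
    have hmon : monVec K p.1 p.2 ∈ inMod o I :=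
      Submodule.subset_span ⟨g' - g, Submodule.sub_mem I hg'I hgI, hzero, p, hpinit, rfl⟩
    have hp : p ∈ vsupp (g' - g) := hpinit.1
    have hdiff : g' - g = (f - g) - h' := by
      rw [heq]
      abel
    rw [hdiff] at hp
    have hcoeff : MvPowerSeries.coeff p.1 ((f - g) p.2) -
        MvPowerSeries.coeff p.1 (h' p.2) ≠ 0 := by
      have h3 : MvPowerSeries.coeff p.1 (((f - g) - h') p.2) ≠ 0 := hp
      rwa [Pi.sub_apply, map_sub] at h3
    by_cases h1 : MvPowerSeries.coeff p.1 ((f - g) p.2) = 0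
    · have h2 : MvPowerSeries.coeff p.1 (h' p.2) ≠ 0 := by
        intro h0
        rw [h1, h0, sub_zero] at hcoeff
        exact hcoeff rfl
      exact hh'co p h2 hmon
    · exact hco p h1 hmon
end

section
/- Let K be a field, < a monomial order on ℕⁿ × {1,…,s}, and I a submodule of the polynomial module K[x₁,…,xₙ]^s. For nonzero F ∈ K[x]^s let lm(F) = x^α e_ℓ where (α,ℓ) is the <-maximum of supp(F); let lm(I) be the submodule generated by the lm(F) for nonzero F ∈ I, and let co(I) be the K-subspace of polynomial vectors whose support contains no (α,ℓ) with x^α e_ℓ ∈ lm(I). Then K[x]^s = I ⊕ co(I): every F ∈ K[x]^s is uniquely F = G + C with G ∈ I and C ∈ co(I). -/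
variable {K : Type*} [Field K] {n s : ℕ}

/-- Support of a polynomial vector. -/
def pvsupp (F : Fin s → MvPolynomial (Fin n) K) : Set ((Fin n →₀ ℕ) × Fin s) :=
  {p | MvPolynomial.coeff p.1 (F p.2) ≠ 0}

/-- The monomial vector `x^α · e_ℓ` in `K[x]^s`. -/
noncomputable def pMonVec (K : Type*) [Field K] {n s : ℕ} (α : Fin n →₀ ℕ) (ℓ : Fin s) :
    Fin s → MvPolynomial (Fin n) K :=
  Pi.single ℓ (MvPolynomial.monomial α 1)

/-- `(α,ℓ)` is the exponent of the leading monomial vector of `F` (the `<`-maximum of the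
support). -/
def IsLeading (o : MonOrder n s) (F : Fin s → MvPolynomial (Fin n) K)
    (p : (Fin n →₀ ℕ) × Fin s) : Prop :=
  p ∈ pvsupp F ∧ ∀ q ∈ pvsupp F, q ≠ p → o.lt q p

/-- The leading module of a submodule `I` of `K[x]^s`. -/
noncomputable def lmMod (o : MonOrder n s)
    (I : Submodule (MvPolynomial (Fin n) K) (Fin s → MvPolynomial (Fin n) K)) :
    Submodule (MvPolynomial (Fin n) K) (Fin s → MvPolynomial (Fin n) K) :=
  Submodule.span _ {v | ∃ F ∈ I, F ≠ 0 ∧ ∃ p, IsLeading o F p ∧ v = pMonVec K p.1 p.2}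

/-- The canonical direct monomial complement of `lm(I)` in `K[x]^s`. -/
def pCoMod (o : MonOrder n s)
    (I : Submodule (MvPolynomial (Fin n) K) (Fin s → MvPolynomial (Fin n) K)) :
    Set (Fin s → MvPolynomial (Fin n) K) :=
  {C | ∀ p ∈ pvsupp C, pMonVec K p.1 p.2 ∉ lmMod o I}

open MvPolynomial in
lemma mem_pvsupp_pMonVec {p : (Fin n →₀ ℕ) × Fin s} {α : Fin n →₀ ℕ} {ℓ : Fin s} :
    p ∈ pvsupp (pMonVec K α ℓ) ↔ p = (α, ℓ) := by
  obtain ⟨δ, m⟩ := p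
  simp only [pvsupp, pMonVec, Set.mem_setOf_eq, Prod.mk.injEq]
  by_cases h : m = ℓ
  · subst h
    rw [Pi.single_eq_same]
    constructor
    · intro hq
      rw [coeff_monomial] at hq
      refine ⟨?_, rfl⟩
      by_contra hne
      rw [if_neg (fun hh => hne hh.symm)] at hq
      exact hq rfl
    · rintro ⟨rfl, -⟩
      rw [coeff_monomial, if_pos rfl]
      exact one_ne_zero
  · simp [Pi.single_eq_of_ne h, h]

lemma pMonVec_eq_iff {α β : Fin n →₀ ℕ} {ℓ m : Fin s}
    (h : pMonVec K α ℓ = pMonVec K β m) : α = β ∧ ℓ = m := by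
  have h1 : ((α, ℓ) : (Fin n →₀ ℕ) × Fin s) ∈ pvsupp (pMonVec K β m) := by
    rw [← h, mem_pvsupp_pMonVec]
  rw [mem_pvsupp_pMonVec] at h1
  exact ⟨congrArg Prod.fst h1, congrArg Prod.snd h1⟩

lemma pvsupp_finite (F : Fin s → MvPolynomial (Fin n) K) : (pvsupp F).Finite := by
  apply Set.Finite.ofFinset (Finset.univ.biUnion fun ℓ => ((F ℓ).support.image fun α => (α, ℓ)))
  intro p
  obtain ⟨δ, m⟩ := p
  simp [pvsupp, MvPolynomial.mem_support_iff, Prod.ext_iff, eq_comm]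

lemma exists_omax (o : MonOrder n s) (S : Finset ((Fin n →₀ ℕ) × Fin s)) :
    S.Nonempty → ∃ p ∈ S, ∀ q ∈ S, q ≠ p → o.lt q p := by
  induction S using Finset.induction_on with
  | empty => intro h; simp at h
  | @insert a S' ha IH =>
    intro _
    by_cases hS' : S'.Nonempty
    · obtain ⟨p, hp, hmax⟩ := IH hS'
      rcases o.trichotomous a p with h | h | h
      · refine ⟨p, Finset.mem_insert_of_mem hp, ?_⟩
        intro q hq hqp
        rcases Finset.mem_insert.1 hq with rfl | hq'
        · exact h
        · exact hmax q hq' hqp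
      · subst h
        refine ⟨a, Finset.mem_insert_of_mem hp, ?_⟩
        intro q hq hqp
        rcases Finset.mem_insert.1 hq with rfl | hq'
        · exact absurd rfl hqp
        · exact hmax q hq' hqp
      · refine ⟨a, Finset.mem_insert_self a S', ?_⟩
        intro q hq hqa
        rcases Finset.mem_insert.1 hq with rfl | hq'
        · exact absurd rfl hqa
        · by_cases hqp : q = p
          · subst hqp; exact h
          · exact o.trans q p a (hmax q hq' hqp) h
    · rw [Finset.not_nonempty_iff_eq_empty] at hS'
      subst hS'
      refine ⟨a, Finset.mem_insert_self a ∅, ?_⟩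
      intro q hq hqa
      rcases Finset.mem_insert.1 hq with rfl | hq'
      · exact absurd rfl hqa
      · simp at hq'

lemma exists_leading (o : MonOrder n s) {F : Fin s → MvPolynomial (Fin n) K}
    (hF : F ≠ 0) : ∃ p, IsLeading o F p := by
  have hfin := pvsupp_finite F
  have hne : (pvsupp F).Nonempty := by
    by_contra h
    rw [Set.not_nonempty_iff_eq_empty] at h
    apply hF
    funext ℓ
    ext α
    by_contra hc
    have : ((α, ℓ) : (Fin n →₀ ℕ) × Fin s) ∈ pvsupp F := by
      simpa [pvsupp] using hc
    rw [h] at this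
    exact this
  obtain ⟨p, hp, hmax⟩ := exists_omax o hfin.toFinset (by simpa using hne)
  exact ⟨p, by simpa using hp, fun q hq hqp => hmax q (by simpa using hq) hqp⟩

open MvPolynomial in
lemma exists_leading_divides (o : MonOrder n s)
    (I : Submodule (MvPolynomial (Fin n) K) (Fin s → MvPolynomial (Fin n) K))
    {α : Fin n →₀ ℕ} {ℓ : Fin s} (h : pMonVec K α ℓ ∈ lmMod o I) :
    ∃ β, β ≤ α ∧ ∃ H ∈ I, H ≠ 0 ∧ IsLeading o H (β, ℓ) := by
  classical
  set S : Set (Fin s → MvPolynomial (Fin n) K) :=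
    {v | ∃ F ∈ I, F ≠ 0 ∧ ∃ p, IsLeading o F p ∧ v = pMonVec K p.1 p.2} with hSdef
  let M : Submodule (MvPolynomial (Fin n) K) (Fin s → MvPolynomial (Fin n) K) :=
    { carrier := {F | ∀ p ∈ pvsupp F, ∃ β, β ≤ p.1 ∧ pMonVec K β p.2 ∈ S}
      zero_mem' := by intro p hp; simp [pvsupp] at hp
      add_mem' := by
        intro a b ha hb p hp
        simp only [pvsupp, Set.mem_setOf_eq, Pi.add_apply, coeff_add] at hp
        by_cases hac : coeff p.1 (a p.2) ≠ 0
        · exact ha p hac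
        · push_neg at hac
          exact hb p (by intro hbc; rw [hac, hbc, add_zero] at hp; exact hp rfl)
      smul_mem' := by
        intro c x hx p hp
        simp only [pvsupp, Set.mem_setOf_eq, Pi.smul_apply, smul_eq_mul, coeff_mul] at hp
        obtain ⟨⟨u, v⟩, huv, hne⟩ := Finset.exists_ne_zero_of_sum_ne_zero hp
        have hvmem : ((v, p.2) : (Fin n →₀ ℕ) × Fin s) ∈ pvsupp x := by
          simp only [pvsupp, Set.mem_setOf_eq]
          intro h0
          rw [h0, mul_zero] at hne
          exact hne rfl
        obtain ⟨β, hβ, hβS⟩ := hx (v, p.2) hvmem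
        refine ⟨β, hβ.trans ?_, hβS⟩
        have := Finset.HasAntidiagonal.mem_antidiagonal.1 huv
        calc v ≤ u + v := le_add_self
          _ = p.1 := this }
  have hle : lmMod o I ≤ M := by
    rw [lmMod, Submodule.span_le]
    rintro v ⟨F, hFI, hF0, q, hq, rfl⟩
    intro p hp
    rw [mem_pvsupp_pMonVec] at hp
    subst hp
    exact ⟨q.1, le_refl _, ⟨F, hFI, hF0, q, hq, rfl⟩⟩
  obtain ⟨β, hβ, H, hHI, hH0, q, hq, hv⟩ :=
    hle h (α, ℓ) (mem_pvsupp_pMonVec.2 rfl)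
  obtain ⟨h1, h2⟩ := pMonVec_eq_iff hv
  refine ⟨β, hβ, H, hHI, hH0, ?_⟩
  have : q = (β, ℓ) := Prod.ext h1.symm h2.symm
  rwa [this] at hq

open MvPolynomial in
/-- Polynomial division theorem: `K[x]^s = I ⊕ co(I)` (Theorem 4.3). -/
theorem polynomial_division (hn : 1 ≤ n) (hs : 1 ≤ s) (o : MonOrder n s)
    (I : Submodule (MvPolynomial (Fin n) K) (Fin s → MvPolynomial (Fin n) K)) :
    ∀ F : Fin s → MvPolynomial (Fin n) K,
      ∃ G C, G ∈ I ∧ C ∈ pCoMod o I ∧ F = G + C ∧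
        ∀ G' C', G' ∈ I → C' ∈ pCoMod o I → F = G' + C' → G' = G ∧ C' = C := by
  classical
  -- existence
  have zero_co : (0 : Fin s → MvPolynomial (Fin n) K) ∈ pCoMod o I := by
    intro p hp; simp [pvsupp] at hp
  have key : ∀ p : (Fin n →₀ ℕ) × Fin s, ∀ F : Fin s → MvPolynomial (Fin n) K,
      IsLeading o F p → ∃ G C, G ∈ I ∧ C ∈ pCoMod o I ∧ F = G + C := by
    intro p
    induction p using o.wf.induction with
    | _ p IH =>
      intro F hF
      have step : ∀ F' : Fin s → MvPolynomial (Fin n) K,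
          (∀ q ∈ pvsupp F', o.lt q p) →
          ∃ G C, G ∈ I ∧ C ∈ pCoMod o I ∧ F' = G + C := by
        intro F' hF'
        by_cases h0 : F' = 0
        · exact ⟨0, 0, Submodule.zero_mem I, zero_co, by simp [h0]⟩
        · obtain ⟨p', hp'⟩ := exists_leading o h0
          exact IH p' (hF' p' hp'.1) F' hp'
      set c : K := coeff p.1 (F p.2) with hc
      have hc0 : c ≠ 0 := hF.1
      by_cases hm : pMonVec K p.1 p.2 ∈ lmMod o I
      · -- reduce by an element of I
        obtain ⟨β, hβ, H, hHI, hH0, hHl⟩ := exists_leading_divides o I hm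
        set d : K := coeff β (H p.2) with hd
        have hd0 : d ≠ 0 := hHl.1
        set γ : Fin n →₀ ℕ := p.1 - β with hγ
        have hγβ : γ + β = p.1 := tsub_add_cancel_of_le hβ
        set u : MvPolynomial (Fin n) K := monomial γ (c / d) with hu
        set F' : Fin s → MvPolynomial (Fin n) K := F - u • H with hF'
        have hcoe : coeff p.1 (u * H p.2) = c := by
          rw [hu, ← hγβ, coeff_monomial_mul, ← hd, div_mul_cancel₀ _ hd0]
        have hsmall : ∀ q ∈ pvsupp F', o.lt q p := by
          intro q hq
          have hcq : coeff q.1 (F q.2) - coeff q.1 (u * H q.2) ≠ 0 := by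
            simpa only [hF', pvsupp, Set.mem_setOf_eq, Pi.sub_apply, Pi.smul_apply,
              smul_eq_mul, coeff_sub] using hq
          have hqnep : q ≠ p := by
            rintro rfl
            apply hcq
            rw [hcoe, ← hc, sub_self]
          by_cases hqF : coeff q.1 (F q.2) ≠ 0
          · exact hF.2 q hqF hqnep
          · push_neg at hqF
            have hqc : coeff q.1 (u * H q.2) ≠ 0 := by
              intro h0; rw [hqF, h0, sub_zero] at hcq; exact hcq rfl
            rw [coeff_mul] at hqc
            obtain ⟨⟨a, b⟩, hab, hne⟩ := Finset.exists_ne_zero_of_sum_ne_zero hqc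
            have hab' : a + b = q.1 := Finset.HasAntidiagonal.mem_antidiagonal.1 hab
            have ha : a = γ := by
              by_contra hne'
              rw [hu, coeff_monomial, if_neg (fun h => hne' h.symm), zero_mul] at hne
              exact hne rfl
            have hbH : ((b, q.2) : (Fin n →₀ ℕ) × Fin s) ∈ pvsupp H := by
              simp only [pvsupp, Set.mem_setOf_eq]
              intro h0; rw [h0, mul_zero] at hne; exact hne rfl
            have hbne : ((b, q.2) : (Fin n →₀ ℕ) × Fin s) ≠ (β, p.2) := by
              intro heq
              apply hqnep
              have hb : b = β := (Prod.ext_iff.1 heq).1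
              have h2 : q.2 = p.2 := (Prod.ext_iff.1 heq).2
              have : q.1 = p.1 := by rw [← hab', ha, hb, hγβ]
              exact Prod.ext this h2
            have hlt := hHl.2 (b, q.2) hbH hbne
            have h3 : o.lt (b + γ, q.2) (β + γ, p.2) := o.add_compat (b, q.2) (β, p.2) γ hlt
            have e1 : b + γ = q.1 := by rw [add_comm, ← ha, hab']
            have e2 : β + γ = p.1 := by rw [add_comm]; exact hγβ
            rw [e1, e2] at h3
            exact h3
        obtain ⟨G', C, hG'I, hC, hFC⟩ := step F' hsmall
        refine ⟨u • H + G', C, Submodule.add_mem I (Submodule.smul_mem I u hHI) hG'I, hC, ?_⟩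
        have : F = u • H + F' := by rw [hF']; abel
        rw [this, hFC, add_assoc]
      · -- move the leading term to the complement part
        set T : Fin s → MvPolynomial (Fin n) K := Pi.single p.2 (monomial p.1 c) with hT
        have hTsupp : ∀ q ∈ pvsupp T, q = p := by
          intro q hq
          obtain ⟨δ, m⟩ := q
          simp only [pvsupp, hT, Set.mem_setOf_eq] at hq
          by_cases hmp : m = p.2
          · subst hmp
            rw [Pi.single_eq_same, coeff_monomial] at hq
            have : p.1 = δ := by by_contra h; rw [if_neg h] at hq; exact hq rfl
            exact Prod.ext this.symm rfl
          · rw [Pi.single_eq_of_ne hmp] at hq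
            simp at hq
        have hTp : coeff p.1 (T p.2) = c := by
          rw [hT, Pi.single_eq_same, coeff_monomial, if_pos rfl]
        set F' : Fin s → MvPolynomial (Fin n) K := F - T with hF'
        have hsmall : ∀ q ∈ pvsupp F', o.lt q p := by
          intro q hq
          have hcq : coeff q.1 (F q.2) - coeff q.1 (T q.2) ≠ 0 := by
            simpa only [hF', pvsupp, Set.mem_setOf_eq, Pi.sub_apply, coeff_sub] using hq
          have hqnep : q ≠ p := by
            rintro rfl; apply hcq; rw [hTp, ← hc, sub_self]
          have hqF : coeff q.1 (F q.2) ≠ 0 := by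
            intro h0
            apply hcq
            have hqT : coeff q.1 (T q.2) = 0 := by
              by_contra h1
              exact hqnep (hTsupp q h1)
            rw [h0, hqT, sub_self]
          exact hF.2 q hqF hqnep
        obtain ⟨G, C', hGI, hC', hFC⟩ := step F' hsmall
        refine ⟨G, C' + T, hGI, ?_, ?_⟩
        · intro q hq
          have : coeff q.1 (C' q.2) + coeff q.1 (T q.2) ≠ 0 := by
            simpa [pvsupp] using hq
          by_cases hqC : coeff q.1 (C' q.2) ≠ 0
          · exact hC' q hqC
          · push_neg at hqC
            have hqT : coeff q.1 (T q.2) ≠ 0 := by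
              intro h0; rw [hqC, h0, add_zero] at this; exact this rfl
            have := hTsupp q hqT
            subst this
            exact hm
        · have : F = F' + T := by rw [hF']; abel
          rw [this, hFC]; abel
  have exist : ∀ F : Fin s → MvPolynomial (Fin n) K,
      ∃ G C, G ∈ I ∧ C ∈ pCoMod o I ∧ F = G + C := by
    intro F
    by_cases hF : F = 0
    · exact ⟨0, 0, Submodule.zero_mem I, zero_co, by simp [hF]⟩
    · obtain ⟨p, hp⟩ := exists_leading o hF
      exact key p F hp
  intro F
  obtain ⟨G, C, hGI, hC, hFC⟩ := exist F
  refine ⟨G, C, hGI, hC, hFC, ?_⟩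
  intro G' C' hG'I hC' hFC'
  -- uniqueness
  have hD : C' - C = G - G' := by
    rw [sub_eq_sub_iff_add_eq_add, add_comm, ← hFC']
    exact hFC
  have hDI : C' - C ∈ I := hD ▸ Submodule.sub_mem I hGI hG'I
  have hD0 : C' - C = 0 := by
    by_contra h0
    obtain ⟨p, hp⟩ := exists_leading o h0
    have hmem : pMonVec K p.1 p.2 ∈ lmMod o I :=
      Submodule.subset_span ⟨C' - C, hDI, h0, p, hp, rfl⟩
    have hpsupp : p ∈ pvsupp C' ∨ p ∈ pvsupp C := by
      have := hp.1
      simp only [pvsupp, Set.mem_setOf_eq, Pi.sub_apply, coeff_sub] at this ⊢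
      by_contra hcon
      push_neg at hcon
      rw [hcon.1, hcon.2, sub_self] at this
      exact this rfl
    rcases hpsupp with h | h
    · exact hC' p h hmem
    · exact hC p h hmem
  have hCC : C' = C := by
    have := sub_eq_zero.1 hD0; exact this
  refine ⟨?_, hCC⟩
  have h1 : G' + C = F := by rw [hFC', hCC]
  have h2 : G + C = F := hFC.symm
  exact add_right_cancel (h1.trans h2.symm)
end

section
/- Let K be a field, < a monomial order on ℕⁿ × {1,…,s}, and I a submodule of K[x₁,…,xₙ]^s whose leading module lm(I) is an echelon: its exponent set is the finite disjoint union over k = 1,…,r of boxes {(α_k+β, ℓ_k) : β ∈ ℕⁿ with βᵢ = 0 for all i > n_k}. Let G₁,…,G_r ∈ I be polynomial vectors with lm(G_k) = x^{α_k} e_{ℓ_k} (a polynomial Janet basis of I with scopes n_k). Then every F ∈ K[x]^s admits a unique decomposition F = Σ_{k=1}^r A_k G_k + C with A_k a polynomial in the variables x₁,…,x_{n_k} only and C ∈ co(I). -/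
variable {K : Type*} [Field K] {n s : ℕ}

/-- The box with vertex `(α,ℓ)` and scope `m`. -/
def pBoxAt {n s : ℕ} (p : (Fin n →₀ ℕ) × Fin s) (m : ℕ) : Set ((Fin n →₀ ℕ) × Fin s) :=
  {q | ∃ β : Fin n →₀ ℕ, (∀ i : Fin n, m ≤ (i : ℕ) → β i = 0) ∧ q = (p.1 + β, p.2)}

/-- A polynomial depends only on the variables `x₁,…,x_m`. -/
def pDependsOnFirst (m : ℕ) (A : MvPolynomial (Fin n) K) : Prop :=
  ∀ β : Fin n →₀ ℕ, MvPolynomial.coeff β A ≠ 0 → ∀ i : Fin n, m ≤ (i : ℕ) → β i = 0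


namespace JanetAux

variable {K : Type*} [Field K] {n s : ℕ} (o : MonOrder n s)

lemma lt_irrefl (a) : ¬ o.lt a a := o.wf.isIrrefl.irrefl a

lemma lt_asymm {a b} (h : o.lt a b) : ¬ o.lt b a :=
  fun h' => lt_irrefl o a (o.trans a b a h h')

/-- finite nonempty sets have a strict maximum -/
lemma finset_max (t : Finset ((Fin n →₀ ℕ) × Fin s)) (ht : t.Nonempty) :
    ∃ p ∈ t, ∀ q ∈ t, q ≠ p → o.lt q p := by
  induction t using Finset.induction with
  | empty => exact absurd ht (by simp)
  | @insert a t ha ih =>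
    rcases t.eq_empty_or_nonempty with rfl | hne
    · exact ⟨a, by simp, by simp⟩
    · obtain ⟨p, hp, hmax⟩ := ih hne
      rcases o.trichotomous a p with h | rfl | h
      · refine ⟨p, Finset.mem_insert_of_mem hp, ?_⟩
        intro q hq hqp
        rcases Finset.mem_insert.1 hq with rfl | hq
        · exact h
        · exact hmax q hq hqp
      · exact absurd hp ha
      · refine ⟨a, Finset.mem_insert_self a t, ?_⟩
        intro q hq hqa
        rcases Finset.mem_insert.1 hq with rfl | hq
        · exact absurd rfl hqa
        · rcases o.trichotomous q p with h' | rfl | h'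
          · exact o.trans _ _ _ h' h
          · exact h
          · exact absurd h' (lt_asymm o (hmax q hq (fun hqp => (lt_irrefl o q) (hqp ▸ h'))))

/-- the finset of support of a polynomial vector -/
noncomputable def suppF (F : Fin s → MvPolynomial (Fin n) K) : Finset ((Fin n →₀ ℕ) × Fin s) :=
  Finset.univ.biUnion (fun ℓ => (F ℓ).support.image (fun α => (α, ℓ)))

lemma mem_suppF {F : Fin s → MvPolynomial (Fin n) K} {p} :
    p ∈ suppF F ↔ p ∈ pvsupp F := by
  simp only [suppF, Finset.mem_biUnion, Finset.mem_univ, true_and, Finset.mem_image,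
    MvPolynomial.mem_support_iff, pvsupp, Set.mem_setOf_eq]
  constructor
  · rintro ⟨ℓ, α, hα, rfl⟩; exact hα
  · intro h; exact ⟨p.2, p.1, h, rfl⟩

lemma exists_leading {F : Fin s → MvPolynomial (Fin n) K} (hF : F ≠ 0) :
    ∃ p, IsLeading o F p := by
  have hne : (suppF F).Nonempty := by
    by_contra h
    apply hF
    funext ℓ
    ext α
    have h2 : (α, ℓ) ∉ suppF F := fun hm => h ⟨_, hm⟩
    rw [mem_suppF] at h2
    simpa [pvsupp] using not_not.1 (by simpa [pvsupp] using h2)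
  obtain ⟨p, hp, hmax⟩ := finset_max o _ hne
  exact ⟨p, mem_suppF.1 hp, fun q hq => hmax q (mem_suppF.2 hq)⟩

lemma leading_unique {F : Fin s → MvPolynomial (Fin n) K} {p q}
    (hp : IsLeading o F p) (hq : IsLeading o F q) : p = q := by
  by_contra h
  exact lt_asymm o (hp.2 q hq.1 (Ne.symm h)) (hq.2 p hp.1 h)

lemma pair_bound {B : MvPolynomial (Fin n) K} {G : Fin s → MvPolynomial (Fin n) K}
    {p : (Fin n →₀ ℕ) × Fin s} (hG : IsLeading o G p) {β : Fin n →₀ ℕ}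
    (hmax : ∀ γ' ∈ B.support, γ' ≠ β → o.lt (γ', p.2) (β, p.2))
    {γ δ : Fin n →₀ ℕ} {m : Fin s} (hγ : γ ∈ B.support) (hδ : (δ, m) ∈ pvsupp G) :
    (γ = β ∧ δ = p.1 ∧ m = p.2) ∨ o.lt (γ + δ, m) (p.1 + β, p.2) := by
  have hstep : o.lt (γ, p.2) (β, p.2) ∨ γ = β := by
    rcases eq_or_ne γ β with h | h
    · exact Or.inr h
    · exact Or.inl (hmax γ hγ h)
  rcases eq_or_ne (δ, m) p with hq | hq
  · have hm : m = p.2 := congrArg Prod.snd hq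
    have hd : δ = p.1 := congrArg Prod.fst hq
    rcases hstep with h | rfl
    · right
      have h1 := o.add_compat (γ, p.2) (β, p.2) p.1 h
      simp only at h1
      rw [hm, hd]
      rwa [add_comm β p.1] at h1
    · exact Or.inl ⟨rfl, hd, hm⟩
  · right
    have h1 : o.lt (δ, m) p := hG.2 _ hδ hq
    have h2 := o.add_compat (δ, m) p γ h1
    simp only at h2
    rw [add_comm γ δ]
    rcases hstep with h | rfl
    · have h3 := o.add_compat (γ, p.2) (β, p.2) p.1 h
      simp only at h3
      rw [add_comm p.1 γ] at h2
      rw [add_comm β p.1] at h3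
      exact o.trans _ _ _ h2 h3
    · rwa [add_comm p.1 γ, add_comm γ p.1] at h2

lemma smul_coeff {B : MvPolynomial (Fin n) K} {G : Fin s → MvPolynomial (Fin n) K}
    {p : (Fin n →₀ ℕ) × Fin s} (hG : IsLeading o G p) {β : Fin n →₀ ℕ}
    (hmax : ∀ γ' ∈ B.support, γ' ≠ β → o.lt (γ', p.2) (β, p.2)) :
    MvPolynomial.coeff (p.1 + β) ((B • G) p.2) =
      MvPolynomial.coeff β B * MvPolynomial.coeff p.1 (G p.2) := by
  have h0 : (B • G) p.2 = B * G p.2 := rfl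
  rw [h0, MvPolynomial.coeff_mul]
  rw [Finset.sum_eq_single_of_mem (β, p.1)
    (Finset.HasAntidiagonal.mem_antidiagonal.2 (add_comm β p.1))]
  rintro ⟨γ, δ⟩ hmem hne
  by_contra h
  have hγ : γ ∈ B.support := MvPolynomial.mem_support_iff.2 (left_ne_zero_of_mul h)
  have hδ : (δ, p.2) ∈ pvsupp G := right_ne_zero_of_mul h
  rcases pair_bound o hG hmax hγ hδ with ⟨h1, h2, _⟩ | hlt
  · exact hne (by rw [h1, h2])
  · rw [Finset.HasAntidiagonal.mem_antidiagonal.1 hmem] at hlt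
    exact lt_irrefl o _ hlt

lemma smul_supp_bound {B : MvPolynomial (Fin n) K} {G : Fin s → MvPolynomial (Fin n) K}
    {p : (Fin n →₀ ℕ) × Fin s} (hG : IsLeading o G p) {β : Fin n →₀ ℕ}
    (hmax : ∀ γ' ∈ B.support, γ' ≠ β → o.lt (γ', p.2) (β, p.2)) :
    ∀ q ∈ pvsupp (B • G), q = (p.1 + β, p.2) ∨ o.lt q (p.1 + β, p.2) := by
  rintro ⟨qα, qm⟩ hq
  have hq' : MvPolynomial.coeff qα (B * G qm) ≠ 0 := hq
  rw [MvPolynomial.coeff_mul] at hq'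
  obtain ⟨⟨γ, δ⟩, hmem, h⟩ := Finset.exists_ne_zero_of_sum_ne_zero hq'
  have hγ : γ ∈ B.support := MvPolynomial.mem_support_iff.2 (left_ne_zero_of_mul h)
  have hδ : (δ, qm) ∈ pvsupp G := right_ne_zero_of_mul h
  have hsum : γ + δ = qα := Finset.HasAntidiagonal.mem_antidiagonal.1 hmem
  rcases pair_bound o hG hmax hγ hδ with ⟨h1, h2, h3⟩ | hlt
  · left; rw [← hsum, h1, h2, h3, add_comm]
  · right; rwa [hsum] at hlt

/-- Reduction step: killing the leading term strictly decreases the leading monomial. -/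
lemma reduce {F T : Fin s → MvPolynomial (Fin n) K} {p : (Fin n →₀ ℕ) × Fin s}
    (hF : IsLeading o F p)
    (hT : ∀ q ∈ pvsupp T, q = p ∨ o.lt q p)
    (hc : MvPolynomial.coeff p.1 (T p.2) = MvPolynomial.coeff p.1 (F p.2)) :
    F - T = 0 ∨ ∃ p', IsLeading o (F - T) p' ∧ o.lt p' p := by
  rcases eq_or_ne (F - T) 0 with h | h
  · exact Or.inl h
  right
  obtain ⟨p', hp'⟩ := exists_leading o h
  refine ⟨p', hp', ?_⟩
  have hmem : p' ∈ pvsupp (F - T) := hp'.1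
  have hco : MvPolynomial.coeff p'.1 ((F - T) p'.2) =
      MvPolynomial.coeff p'.1 (F p'.2) - MvPolynomial.coeff p'.1 (T p'.2) := by
    simp [MvPolynomial.coeff_sub]
  have hne : p' ≠ p := by
    rintro rfl
    apply hmem
    rw [hco, hc, sub_self]
  have hor : p' ∈ pvsupp F ∨ p' ∈ pvsupp T := by
    by_contra hcon
    push_neg at hcon
    apply hmem
    have h1 : MvPolynomial.coeff p'.1 (F p'.2) = 0 := not_not.1 hcon.1
    have h2 : MvPolynomial.coeff p'.1 (T p'.2) = 0 := not_not.1 hcon.2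
    rw [hco, h1, h2, sub_self]
  rcases hor with h1 | h1
  · exact hF.2 _ h1 hne
  · rcases hT _ h1 with h2 | h2
    · exact absurd h2 hne
    · exact h2

end JanetAux

namespace JanetAux

variable {K : Type*} [Field K] {n s : ℕ}

lemma depends_add {m : ℕ} {P Q : MvPolynomial (Fin n) K}
    (hP : pDependsOnFirst m P) (hQ : pDependsOnFirst m Q) :
    pDependsOnFirst m (P + Q) := by
  intro β hβ i hi
  rw [MvPolynomial.coeff_add] at hβ
  have hor : MvPolynomial.coeff β P ≠ 0 ∨ MvPolynomial.coeff β Q ≠ 0 := by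
    by_contra hcon
    push_neg at hcon
    rw [hcon.1, hcon.2, add_zero] at hβ
    exact hβ rfl
  rcases hor with h | h
  · exact hP β h i hi
  · exact hQ β h i hi

lemma depends_zero {m : ℕ} : pDependsOnFirst m (0 : MvPolynomial (Fin n) K) := by
  intro β hβ
  simp at hβ

lemma single_smul_sum {r : ℕ} (k : Fin r) (B : MvPolynomial (Fin n) K)
    (G : Fin r → (Fin s → MvPolynomial (Fin n) K)) :
    ∑ l, (Pi.single k B : Fin r → MvPolynomial (Fin n) K) l • G l = B • G k := by
  rw [Finset.sum_eq_single k]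
  · rw [Pi.single_eq_same]
  · intro l _ h
    rw [Pi.single_eq_of_ne h, zero_smul]
  · simp

lemma zero_mem_pCoMod (o : MonOrder n s)
    (I : Submodule (MvPolynomial (Fin n) K) (Fin s → MvPolynomial (Fin n) K)) :
    (0 : Fin s → MvPolynomial (Fin n) K) ∈ pCoMod o I := by
  intro q hq
  simp [pvsupp] at hq

lemma div_exists (o : MonOrder n s)
    (I : Submodule (MvPolynomial (Fin n) K) (Fin s → MvPolynomial (Fin n) K))
    {r : ℕ} {pq : Fin r → (Fin n →₀ ℕ) × Fin s} {nsc : Fin r → ℕ}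
    (hech : {q | pMonVec K q.1 q.2 ∈ lmMod o I} = ⋃ k, pBoxAt (pq k) (nsc k))
    {G : Fin r → (Fin s → MvPolynomial (Fin n) K)}
    (hGlm : ∀ k, IsLeading o (G k) (pq k))
    (F : Fin s → MvPolynomial (Fin n) K) :
    ∃ (A : Fin r → MvPolynomial (Fin n) K) (C : Fin s → MvPolynomial (Fin n) K),
      (∀ k, pDependsOnFirst (nsc k) (A k)) ∧ C ∈ pCoMod o I ∧
      F = (∑ k, A k • G k) + C := by
  have key : ∀ p : (Fin n →₀ ℕ) × Fin s, ∀ F : Fin s → MvPolynomial (Fin n) K,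
      IsLeading o F p →
      ∃ (A : Fin r → MvPolynomial (Fin n) K) (C : Fin s → MvPolynomial (Fin n) K),
        (∀ k, pDependsOnFirst (nsc k) (A k)) ∧ C ∈ pCoMod o I ∧
        F = (∑ k, A k • G k) + C := by
    refine fun p => o.wf.induction
      (C := fun p => ∀ F : Fin s → MvPolynomial (Fin n) K, IsLeading o F p →
        ∃ (A : Fin r → MvPolynomial (Fin n) K) (C0 : Fin s → MvPolynomial (Fin n) K),
          (∀ k, pDependsOnFirst (nsc k) (A k)) ∧ C0 ∈ pCoMod o I ∧
          F = (∑ k, A k • G k) + C0) p ?_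
    rintro p IH F hF
    have hc : MvPolynomial.coeff p.1 (F p.2) ≠ 0 := hF.1
    by_cases hmem : pMonVec K p.1 p.2 ∈ lmMod o I
    · -- leading monomial reducible by some G k
      have hp : p ∈ ⋃ k, pBoxAt (pq k) (nsc k) := by
        rw [← hech]; exact hmem
      rw [Set.mem_iUnion] at hp
      obtain ⟨k, β, hβ, hpeq⟩ := hp
      have hd : MvPolynomial.coeff (pq k).1 (G k (pq k).2) ≠ 0 := (hGlm k).1
      set c := MvPolynomial.coeff p.1 (F p.2) with hcdef
      set d := MvPolynomial.coeff (pq k).1 (G k (pq k).2) with hddef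
      set B : MvPolynomial (Fin n) K := MvPolynomial.monomial β (c / d) with hBdef
      have hBs : ∀ γ ∈ B.support, γ = β := by
        intro γ hγ
        rw [MvPolynomial.mem_support_iff, hBdef, MvPolynomial.coeff_monomial] at hγ
        by_contra hne
        exact hγ (if_neg (fun h => hne h.symm))
      have hmax : ∀ γ' ∈ B.support, γ' ≠ β → o.lt (γ', (pq k).2) (β, (pq k).2) :=
        fun γ' h h' => absurd (hBs γ' h) h'
      have hBcoeff : MvPolynomial.coeff β B = c / d := by
        rw [hBdef, MvPolynomial.coeff_monomial, if_pos rfl]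
      set T := B • G k with hTdef
      have hT : ∀ q ∈ pvsupp T, q = p ∨ o.lt q p := by
        intro q hq
        rcases smul_supp_bound o (hGlm k) hmax q hq with h | h
        · left; rw [hpeq]; exact h
        · right; rw [hpeq]; exact h
      have hTc : MvPolynomial.coeff p.1 (T p.2) = c := by
        rw [hpeq]
        show MvPolynomial.coeff ((pq k).1 + β) (T (pq k).2) = c
        rw [hTdef, smul_coeff o (hGlm k) hmax, hBcoeff, ← hddef, div_mul_cancel₀ c hd]
      have hsingle : ∀ l, pDependsOnFirst (nsc l) ((Pi.single k B : Fin r → MvPolynomial (Fin n) K) l) := by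
        intro l
        rcases eq_or_ne l k with rfl | hne
        · rw [Pi.single_eq_same]
          intro β' hβ' i hi
          have : β' = β := by
            rw [hBdef, MvPolynomial.coeff_monomial] at hβ'
            by_contra h
            exact hβ' (if_neg (fun h' => h h'.symm))
          rw [this]
          exact hβ i hi
        · rw [Pi.single_eq_of_ne hne]
          exact depends_zero
      rcases reduce o hF hT hTc with h0 | ⟨p', hp', hlt⟩
      · refine ⟨Pi.single k B, 0, hsingle, zero_mem_pCoMod o I, ?_⟩
        rw [single_smul_sum, add_zero, ← hTdef]
        exact sub_eq_zero.1 h0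
      · obtain ⟨A, C, hA, hC, hsum⟩ := IH p' hlt (F - T) hp'
        refine ⟨fun l => A l + (Pi.single k B : Fin r → MvPolynomial (Fin n) K) l, C, fun l => depends_add (hA l) (hsingle l),
          hC, ?_⟩
        have hFeq : F = (∑ l, A l • G l + C) + T := by
          rw [← hsum]; abel
        rw [hFeq]
        have : ∑ l, (A l + (Pi.single k B : Fin r → MvPolynomial (Fin n) K) l) • G l
            = ∑ l, A l • G l + ∑ l, (Pi.single k B : Fin r → MvPolynomial (Fin n) K) l • G l := by
          rw [← Finset.sum_add_distrib]
          exact Finset.sum_congr rfl (fun l _ => add_smul _ _ _)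
        rw [this, single_smul_sum, ← hTdef]
        abel
    · -- leading monomial goes to the remainder
      set c := MvPolynomial.coeff p.1 (F p.2) with hcdef
      set T := c • pMonVec K p.1 p.2 with hTdef
      have hTapp : ∀ m, T m = if m = p.2 then MvPolynomial.monomial p.1 c else 0 := by
        intro m
        rcases eq_or_ne m p.2 with h | hne
        · rw [if_pos h, hTdef]
          show c • (pMonVec K p.1 p.2) m = _
          rw [pMonVec, h, Pi.single_eq_same, MvPolynomial.smul_monomial, smul_eq_mul, mul_one]
        · rw [if_neg hne, hTdef]
          show c • (pMonVec K p.1 p.2) m = _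
          rw [pMonVec, Pi.single_eq_of_ne hne, smul_zero]
      have hTsupp : ∀ q ∈ pvsupp T, q = p := by
        rintro ⟨qα, qm⟩ hq
        have hq' : MvPolynomial.coeff qα (T qm) ≠ 0 := hq
        rw [hTapp qm] at hq'
        rcases eq_or_ne qm p.2 with h | hne
        · rw [if_pos h, MvPolynomial.coeff_monomial] at hq'
          have h1 : p.1 = qα := by
            by_contra hcon
            exact hq' (if_neg hcon)
          exact Prod.ext h1.symm h
        · rw [if_neg hne, MvPolynomial.coeff_zero] at hq'
          exact absurd rfl hq'
      have hT : ∀ q ∈ pvsupp T, q = p ∨ o.lt q p := fun q hq => Or.inl (hTsupp q hq)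
      have hTc : MvPolynomial.coeff p.1 (T p.2) = c := by
        rw [hTapp p.2, if_pos rfl, MvPolynomial.coeff_monomial, if_pos rfl]
      rcases reduce o hF hT hTc with h0 | ⟨p', hp', hlt⟩
      · refine ⟨0, T, fun k => depends_zero, ?_, ?_⟩
        · intro q hq
          rw [hTsupp q hq]
          exact hmem
        · have : F = T := sub_eq_zero.1 h0
          rw [this]
          simp
      · obtain ⟨A, C, hA, hC, hsum⟩ := IH p' hlt (F - T) hp'
        refine ⟨A, C + T, hA, ?_, ?_⟩
        · intro q hq
          have hq' : MvPolynomial.coeff q.1 ((C + T) q.2) ≠ 0 := hq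
          have : MvPolynomial.coeff q.1 (C q.2) ≠ 0 ∨ MvPolynomial.coeff q.1 (T q.2) ≠ 0 := by
            by_contra h
            push_neg at h
            apply hq'
            show MvPolynomial.coeff q.1 (C q.2 + T q.2) = 0
            rw [MvPolynomial.coeff_add, h.1, h.2, add_zero]
          rcases this with h | h
          · exact hC q h
          · rw [hTsupp q h]
            exact hmem
        · have hFeq : F = (∑ l, A l • G l + C) + T := by
            rw [← hsum]; abel
          rw [hFeq]
          abel
  rcases eq_or_ne F 0 with rfl | hF0
  · refine ⟨0, 0, fun k => depends_zero, zero_mem_pCoMod o I, ?_⟩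
    simp
  · obtain ⟨p, hp⟩ := exists_leading o hF0
    exact key p F hp

end JanetAux

namespace JanetAux

variable {K : Type*} [Field K] {n s : ℕ}

lemma div_unique (o : MonOrder n s)
    (I : Submodule (MvPolynomial (Fin n) K) (Fin s → MvPolynomial (Fin n) K))
    {r : ℕ} {pq : Fin r → (Fin n →₀ ℕ) × Fin s} {nsc : Fin r → ℕ}
    (hdisj : ∀ k l, k ≠ l → Disjoint (pBoxAt (pq k) (nsc k)) (pBoxAt (pq l) (nsc l)))
    (hech : {q | pMonVec K q.1 q.2 ∈ lmMod o I} = ⋃ k, pBoxAt (pq k) (nsc k))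
    {G : Fin r → (Fin s → MvPolynomial (Fin n) K)}
    (hGlm : ∀ k, IsLeading o (G k) (pq k))
    {A A' : Fin r → MvPolynomial (Fin n) K} {C C' : Fin s → MvPolynomial (Fin n) K}
    (hA : ∀ k, pDependsOnFirst (nsc k) (A k)) (hA' : ∀ k, pDependsOnFirst (nsc k) (A' k))
    (hC : C ∈ pCoMod o I) (hC' : C' ∈ pCoMod o I)
    (h : (∑ k, A k • G k) + C = (∑ k, A' k • G k) + C') : A = A' ∧ C = C' := by
  classical
  have hAeq : ∀ k, A k = A' k := by
    by_contra hcon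
    push_neg at hcon
    obtain ⟨k1, hk1⟩ := hcon
    set B : Fin r → MvPolynomial (Fin n) K := fun k => A k - A' k with hBdef
    set S : Finset (Fin r) := Finset.univ.filter (fun k => B k ≠ 0) with hSdef
    have hk1S : k1 ∈ S := by
      rw [hSdef, Finset.mem_filter]
      exact ⟨Finset.mem_univ _, sub_ne_zero.2 hk1⟩
    have hzero : ∀ k, k ∉ S → B k = 0 := by
      intro k hk
      rw [hSdef, Finset.mem_filter] at hk
      push_neg at hk
      exact hk (Finset.mem_univ _)
    have hD : (∑ k, B k • G k) = C' - C := by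
      have h1 : ∑ k, B k • G k = (∑ k, A k • G k) - (∑ k, A' k • G k) := by
        rw [← Finset.sum_sub_distrib]
        exact Finset.sum_congr rfl (fun k _ => sub_smul _ _ _)
      rw [h1]
      rw [sub_eq_sub_iff_add_eq_add, h, add_comm]
    -- choose maximal exponents
    have hβ : ∀ k, ∃ β : Fin n →₀ ℕ, B k ≠ 0 →
        β ∈ (B k).support ∧ ∀ γ ∈ (B k).support, γ ≠ β →
          o.lt (γ, (pq k).2) (β, (pq k).2) := by
      intro k
      rcases eq_or_ne (B k) 0 with h0 | h0
      · exact ⟨0, fun hcon => absurd h0 hcon⟩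
      · have hne : ((B k).support.image (fun γ => (γ, (pq k).2))).Nonempty := by
          rw [Finset.image_nonempty]
          exact MvPolynomial.support_nonempty.2 h0
        obtain ⟨pmax, hpm, hpmax⟩ := finset_max o _ hne
        obtain ⟨β, hβs, hβeq⟩ := Finset.mem_image.1 hpm
        refine ⟨β, fun _ => ⟨hβs, ?_⟩⟩
        intro γ hγ hγβ
        have hlt := hpmax (γ, (pq k).2) (Finset.mem_image_of_mem _ hγ)
          (fun hcon => hγβ (congrArg Prod.fst (hcon.trans hβeq.symm)))
        rwa [← hβeq] at hlt
    choose βf hβf using hβ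
    set ρ : Fin r → (Fin n →₀ ℕ) × Fin s := fun k => ((pq k).1 + βf k, (pq k).2) with hρdef
    have hρbox : ∀ k ∈ S, ρ k ∈ pBoxAt (pq k) (nsc k) := by
      intro k hk
      have hBk : B k ≠ 0 := (Finset.mem_filter.1 hk).2
      refine ⟨βf k, ?_, rfl⟩
      intro i hi
      have hs := (hβf k hBk).1
      rw [MvPolynomial.mem_support_iff, hBdef] at hs
      have hor : MvPolynomial.coeff (βf k) (A k) ≠ 0 ∨ MvPolynomial.coeff (βf k) (A' k) ≠ 0 := by
        by_contra hcon2
        push_neg at hcon2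
        apply hs
        rw [MvPolynomial.coeff_sub, hcon2.1, hcon2.2, sub_zero]
      rcases hor with h1 | h1
      · exact hA k _ h1 i hi
      · exact hA' k _ h1 i hi
    have hρinj : ∀ k ∈ S, ∀ l ∈ S, k ≠ l → ρ k ≠ ρ l := by
      intro k hk l hl hkl heq
      exact Set.disjoint_left.1 (hdisj k l hkl) (hρbox k hk) (heq ▸ hρbox l hl)
    have hcoeffk : ∀ k ∈ S, MvPolynomial.coeff (ρ k).1 ((B k • G k) (ρ k).2) ≠ 0 := by
      intro k hk
      have hBk : B k ≠ 0 := (Finset.mem_filter.1 hk).2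
      have hmax : ∀ γ' ∈ (B k).support, γ' ≠ βf k →
          o.lt (γ', (pq k).2) (βf k, (pq k).2) := (hβf k hBk).2
      show MvPolynomial.coeff ((pq k).1 + βf k) ((B k • G k) (pq k).2) ≠ 0
      rw [smul_coeff o (hGlm k) hmax]
      exact mul_ne_zero (MvPolynomial.mem_support_iff.1 (hβf k hBk).1) (hGlm k).1
    have hsuppk : ∀ k ∈ S, ∀ q ∈ pvsupp (B k • G k), q = ρ k ∨ o.lt q (ρ k) := by
      intro k hk
      have hBk : B k ≠ 0 := (Finset.mem_filter.1 hk).2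
      exact smul_supp_bound o (hGlm k) (hβf k hBk).2
    -- the overall maximum
    obtain ⟨pmax, hpm, hpmaxlt⟩ := finset_max o (S.image ρ)
      (Finset.image_nonempty.2 ⟨k1, hk1S⟩)
    obtain ⟨k0, hk0S, hk0eq⟩ := Finset.mem_image.1 hpm
    have hDcoeff : MvPolynomial.coeff pmax.1 ((∑ k, B k • G k) pmax.2) ≠ 0 := by
      have happ : (∑ k, B k • G k) pmax.2 = ∑ k, (B k • G k) pmax.2 := by
        simp
      rw [happ, MvPolynomial.coeff_sum]
      rw [Finset.sum_eq_single k0]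
      · rw [← hk0eq]
        exact hcoeffk k0 hk0S
      · intro l _ hlne
        by_cases hlS : l ∈ S
        · by_contra hne0
          have hmem : pmax ∈ pvsupp (B l • G l) := hne0
          have hρl : ρ l ≠ pmax := by
            intro hcon
            exact hρinj l hlS k0 hk0S hlne (hcon.trans hk0eq.symm)
          have hlt1 : o.lt (ρ l) pmax :=
            hpmaxlt _ (Finset.mem_image_of_mem _ hlS) hρl
          rcases hsuppk l hlS pmax hmem with heq | hlt2
          · exact hρl heq.symm
          · exact lt_asymm o hlt1 hlt2
        · rw [hzero l hlS, zero_smul]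
          simp
      · simp
    have hpmem : pmax ∈ pvsupp (C' - C) := by
      rw [← hD]
      exact hDcoeff
    have hor : pmax ∈ pvsupp C ∨ pmax ∈ pvsupp C' := by
      by_contra hcon2
      push_neg at hcon2
      apply hpmem
      show MvPolynomial.coeff pmax.1 ((C' - C) pmax.2) = 0
      have : (C' - C) pmax.2 = C' pmax.2 - C pmax.2 := rfl
      rw [this, MvPolynomial.coeff_sub, not_not.1 hcon2.1, not_not.1 hcon2.2, sub_self]
    have hinlm : pMonVec K pmax.1 pmax.2 ∈ lmMod o I := by
      have : pmax ∈ {q : (Fin n →₀ ℕ) × Fin s | pMonVec K q.1 q.2 ∈ lmMod o I} := by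
        rw [hech]
        exact Set.mem_iUnion.2 ⟨k0, hk0eq ▸ hρbox k0 hk0S⟩
      exact this
    rcases hor with h1 | h1
    · exact hC pmax h1 hinlm
    · exact hC' pmax h1 hinlm
  have hAA : A = A' := funext hAeq
  refine ⟨hAA, ?_⟩
  have : (∑ k, A k • G k) = ∑ k, A' k • G k := by rw [hAA]
  rw [this] at h
  exact add_left_cancel h

end JanetAux

/-- Polynomial division by a Janet basis when `lm(I)` is an echelon (Theorem 4.4). -/
theorem polynomial_division_janet (hn : 1 ≤ n) (hs : 1 ≤ s) (o : MonOrder n s)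
    (I : Submodule (MvPolynomial (Fin n) K) (Fin s → MvPolynomial (Fin n) K))
    (r : ℕ) (pq : Fin r → (Fin n →₀ ℕ) × Fin s) (nsc : Fin r → ℕ)
    (hscope : ∀ k, nsc k ≤ n)
    (hdisj : ∀ k l, k ≠ l → Disjoint (pBoxAt (pq k) (nsc k)) (pBoxAt (pq l) (nsc l)))
    (hech : {q | pMonVec K q.1 q.2 ∈ lmMod o I} = ⋃ k, pBoxAt (pq k) (nsc k))
    (G : Fin r → (Fin s → MvPolynomial (Fin n) K))
    (hGI : ∀ k, G k ∈ I) (hGlm : ∀ k, IsLeading o (G k) (pq k)) :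
    ∀ F : Fin s → MvPolynomial (Fin n) K,
      ∃ (A : Fin r → MvPolynomial (Fin n) K) (C : Fin s → MvPolynomial (Fin n) K),
        (∀ k, pDependsOnFirst (nsc k) (A k)) ∧ C ∈ pCoMod o I ∧
        F = (∑ k, A k • G k) + C ∧
        ∀ (A' : Fin r → MvPolynomial (Fin n) K) (C' : Fin s → MvPolynomial (Fin n) K),
          (∀ k, pDependsOnFirst (nsc k) (A' k)) → C' ∈ pCoMod o I →
          F = (∑ k, A' k • G k) + C' → A' = A ∧ C' = C := by
  intro F
  obtain ⟨A, C, hA, hC, hsum⟩ := JanetAux.div_exists o I hech hGlm F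
  refine ⟨A, C, hA, hC, hsum, ?_⟩
  intro A' C' hA2 hC2 hsum2
  have h : (∑ k, A' k • G k) + C' = (∑ k, A k • G k) + C := by rw [← hsum2, ← hsum]
  exact JanetAux.div_unique o I hdisj hech hGlm hA2 hA hC2 hC h
end

section
/- (Formal implicit function theorem.) Let K be a field and H = (H₁,…,H_p) a vector of polynomials in K[x₁,…,xₙ,y₁,…,y_p] with H(0,0) = 0 and Jacobian matrix (∂H_i/∂y_j)(0,0) invertible over K. Then there exists a unique vector h = (h₁,…,h_p) of formal power series in K[[x₁,…,xₙ]] with hᵢ(0) = 0 for all i and H_i(x, h₁(x),…,h_p(x)) = 0 for all i. -/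
variable {K : Type*} [Field K] {n p : ℕ}

/-- Substitution of the power series vector `h` for the `y`-variables (and `xⱼ` for itself)
in a polynomial `H ∈ K[x,y]`, yielding a power series in `K[[x]]`. -/
noncomputable def substY (H : MvPolynomial (Fin n ⊕ Fin p) K)
    (h : Fin p → MvPowerSeries (Fin n) K) : MvPowerSeries (Fin n) K :=
  MvPolynomial.aeval (Sum.elim (fun j => MvPowerSeries.X j) h) H

/-- A mother code: a vector `H = (H₁,…,H_p)` of polynomials in `K[x,y]` with `H(0,0) = 0`
whose Jacobian matrix `(∂H_i/∂y_j)` is invertible at the origin. -/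
def IsMotherCode (H : Fin p → MvPolynomial (Fin n ⊕ Fin p) K) : Prop :=
  (∀ i, MvPolynomial.eval (0 : Fin n ⊕ Fin p → K) (H i) = 0) ∧
  IsUnit (Matrix.of fun i j : Fin p =>
    MvPolynomial.eval (0 : Fin n ⊕ Fin p → K) (MvPolynomial.pderiv (Sum.inr j) (H i)))

/-- A formal power series is algebraic if it satisfies a nontrivial polynomial relation
over `K[x₁,…,xₙ]`. -/
def IsAlgPS {n : ℕ} (f : MvPowerSeries (Fin n) K) : Prop :=
  ∃ (d : ℕ) (q : Fin (d + 1) → MvPolynomial (Fin n) K), (∃ i, q i ≠ 0) ∧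
    ∑ i : Fin (d + 1), (q i : MvPowerSeries (Fin n) K) * f ^ (i : ℕ) = 0

namespace FIFaux

open MvPowerSeries MvPolynomial

/-- total degree of a multi-index -/
def deg (d : Fin n →₀ ℕ) : ℕ := ∑ i, d i

lemma deg_zero : deg (0 : Fin n →₀ ℕ) = 0 := by simp [deg]

lemma eq_zero_of_deg_eq_zero {d : Fin n →₀ ℕ} (h : deg d = 0) : d = 0 := by
  ext i
  have := Finset.sum_eq_zero_iff.mp h i (Finset.mem_univ i)
  simpa using this

lemma deg_mono {e d : Fin n →₀ ℕ} (h : e ≤ d) : deg e ≤ deg d :=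
  Finset.sum_le_sum fun i _ => h i

lemma deg_strict {e d : Fin n →₀ ℕ} (h : e ≤ d) (hne : e ≠ d) : deg e < deg d := by
  obtain ⟨c, rfl⟩ := le_iff_exists_add.mp h
  have hc : c ≠ 0 := by rintro rfl; simp at hne
  obtain ⟨i, hi⟩ : ∃ i, c i ≠ 0 := by
    by_contra hcon
    push_neg at hcon
    exact hc (Finsupp.ext fun i => hcon i)
  have : 0 < deg c := by
    have : 1 ≤ c i := Nat.one_le_iff_ne_zero.mpr hi
    calc 0 < c i := this
    _ ≤ deg c := Finset.single_le_sum (fun _ _ => Nat.zero_le _) (Finset.mem_univ i)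
  have : deg (e + c) = deg e + deg c := by
    simp [deg, Finsupp.add_apply, Finset.sum_add_distrib]
  omega

/-- The ideal of power series whose coefficients vanish at all multi-indices `≤ d`. -/
def Idl (K : Type*) [Field K] {n : ℕ} (d : Fin n →₀ ℕ) :
    Ideal (MvPowerSeries (Fin n) K) where
  carrier := {f | ∀ e ≤ d, MvPowerSeries.coeff e f = 0}
  add_mem' := by
    intro f g hf hg e he
    simp [map_add, hf e he, hg e he]
  zero_mem' := by intro e he; simp
  smul_mem' := by
    intro r f hf e he
    rw [smul_eq_mul, MvPowerSeries.coeff_mul]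
    apply Finset.sum_eq_zero
    intro q hq
    have hq2 : q.2 ≤ d := by
      have h1 : q.1 + q.2 = e := Finset.HasAntidiagonal.mem_antidiagonal.mp hq
      have : q.2 ≤ e := h1 ▸ le_add_self
      exact this.trans he
    rw [hf q.2 hq2, mul_zero]

lemma mem_Idl {d : Fin n →₀ ℕ} {f : MvPowerSeries (Fin n) K} :
    f ∈ Idl K d ↔ ∀ e ≤ d, MvPowerSeries.coeff e f = 0 := Iff.rfl

/-- "supported only at `d` (among indices `≤ d`)" -/
def Below (d : Fin n →₀ ℕ) (f : MvPowerSeries (Fin n) K) : Prop :=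
  ∀ e ≤ d, e ≠ d → MvPowerSeries.coeff e f = 0

lemma mul_below_mem_Idl {d : Fin n →₀ ℕ} {f g : MvPowerSeries (Fin n) K}
    (hf : MvPowerSeries.constantCoeff f = 0) (hg : Below d g) :
    f * g ∈ Idl K d := by
  intro e he
  rw [MvPowerSeries.coeff_mul]
  apply Finset.sum_eq_zero
  intro q hq
  have hsum : q.1 + q.2 = e := Finset.HasAntidiagonal.mem_antidiagonal.mp hq
  have hq2' : q.2 ≤ e := by rw [← hsum]; exact le_add_self
  have hq2 : q.2 ≤ d := hq2'.trans he
  by_cases h2 : q.2 = d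
  · have hq1 : q.1 = 0 := by
      have : q.1 + d ≤ d := by
        have h3 : q.1 + q.2 ≤ d := hsum.le.trans he
        rwa [h2] at h3
      have := (add_le_iff_nonpos_left).mp this
      exact le_antisymm this zero_le
    rw [hq1]
    rw [MvPowerSeries.coeff_zero_eq_constantCoeff, hf, zero_mul]
  · rw [hg q.2 hq2 h2, mul_zero]

lemma below_mul_mem_Idl {d : Fin n →₀ ℕ} {f g : MvPowerSeries (Fin n) K}
    (hf : Below d f) (hg : MvPowerSeries.constantCoeff g = 0) :
    f * g ∈ Idl K d := by
  rw [mul_comm]; exact mul_below_mem_Idl hg hf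

lemma below_zero_coeff {d : Fin n →₀ ℕ} (hd : d ≠ 0) {f : MvPowerSeries (Fin n) K}
    (hf : Below d f) : MvPowerSeries.constantCoeff f = 0 := by
  rw [← MvPowerSeries.coeff_zero_eq_constantCoeff]
  exact hf 0 zero_le (fun h => hd h.symm)

/-- coefficients `≤ d` of a substitution only depend on coefficients `≤ d` of the inputs -/
lemma substY_congr_mem_Idl {d : Fin n →₀ ℕ} {h h' : Fin p → MvPowerSeries (Fin n) K}
    (hag : ∀ j, h j - h' j ∈ Idl K d) (P : MvPolynomial (Fin n ⊕ Fin p) K) :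
    substY P h - substY P h' ∈ Idl K d := by
  rw [← Ideal.Quotient.eq]
  have e1 : (Ideal.Quotient.mkₐ K (Idl K d)).comp
      (MvPolynomial.aeval (Sum.elim (fun j => (MvPowerSeries.X j : MvPowerSeries (Fin n) K)) h))
      = MvPolynomial.aeval
        (fun s => Ideal.Quotient.mkₐ K (Idl K d)
          (Sum.elim (fun j => (MvPowerSeries.X j : MvPowerSeries (Fin n) K)) h s)) :=
    MvPolynomial.comp_aeval _ _
  have e2 : (Ideal.Quotient.mkₐ K (Idl K d)).comp
      (MvPolynomial.aeval (Sum.elim (fun j => (MvPowerSeries.X j : MvPowerSeries (Fin n) K)) h'))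
      = MvPolynomial.aeval
        (fun s => Ideal.Quotient.mkₐ K (Idl K d)
          (Sum.elim (fun j => (MvPowerSeries.X j : MvPowerSeries (Fin n) K)) h' s)) :=
    MvPolynomial.comp_aeval _ _
  have key : (fun s => Ideal.Quotient.mkₐ K (Idl K d)
          (Sum.elim (fun j => (MvPowerSeries.X j : MvPowerSeries (Fin n) K)) h s))
      = (fun s => Ideal.Quotient.mkₐ K (Idl K d)
          (Sum.elim (fun j => (MvPowerSeries.X j : MvPowerSeries (Fin n) K)) h' s)) := by
    funext s
    cases s with
    | inl j => rfl
    | inr j =>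
      simp only [Sum.elim_inr, Ideal.Quotient.mkₐ_eq_mk]
      exact Ideal.Quotient.eq.mpr (hag j)
  show Ideal.Quotient.mk (Idl K d) (substY P h) = Ideal.Quotient.mk (Idl K d) (substY P h')
  have := congrFun (congrArg DFunLike.coe (e1.trans (key ▸ e2.symm))) P
  simpa [substY] using this

lemma constantCoeff_substY (P : MvPolynomial (Fin n ⊕ Fin p) K)
    {h : Fin p → MvPowerSeries (Fin n) K}
    (hh : ∀ j, MvPowerSeries.constantCoeff (h j) = 0) :
    MvPowerSeries.constantCoeff (substY P h)
      = MvPolynomial.eval (0 : Fin n ⊕ Fin p → K) P := by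
  induction P using MvPolynomial.induction_on with
  | C a => simp [substY, MvPowerSeries.algebraMap_apply]
  | add P Q hP hQ => simp only [substY, map_add] at *; rw [hP, hQ]
  | mul_X P s hP =>
    simp only [substY, map_mul] at *
    rw [hP]
    cases s with
    | inl j => simp [MvPolynomial.aeval_X]
    | inr j => simp [MvPolynomial.aeval_X, hh j]

/-- The key linearization lemma: modulo `Idl d` the substitution is affine in a
perturbation supported at `d`. -/
lemma substY_linearize {d : Fin n →₀ ℕ} (hd : d ≠ 0)
    {h δ : Fin p → MvPowerSeries (Fin n) K}
    (hh : ∀ j, MvPowerSeries.constantCoeff (h j) = 0)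
    (hδ : ∀ j, Below d (δ j)) (P : MvPolynomial (Fin n ⊕ Fin p) K) :
    substY P (fun j => h j + δ j) - substY P h
      - ∑ j, MvPowerSeries.C
          (MvPolynomial.eval (0 : Fin n ⊕ Fin p → K) (MvPolynomial.pderiv (Sum.inr j) P)) * δ j
      ∈ Idl K d := by
  induction P using MvPolynomial.induction_on with
  | C a =>
    have : substY (MvPolynomial.C a) (fun j => h j + δ j) - substY (MvPolynomial.C a) h
      - ∑ j, MvPowerSeries.C
          (MvPolynomial.eval (0 : Fin n ⊕ Fin p → K)
            (MvPolynomial.pderiv (Sum.inr j) (MvPolynomial.C a))) * δ j = 0 := by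
      simp [substY]
    rw [this]; exact (Idl K d).zero_mem
  | add P Q hP hQ =>
    have : substY (P + Q) (fun j => h j + δ j) - substY (P + Q) h
      - ∑ j, MvPowerSeries.C
          (MvPolynomial.eval (0 : Fin n ⊕ Fin p → K)
            (MvPolynomial.pderiv (Sum.inr j) (P + Q))) * δ j
      = (substY P (fun j => h j + δ j) - substY P h
          - ∑ j, MvPowerSeries.C
              (MvPolynomial.eval (0 : Fin n ⊕ Fin p → K)
                (MvPolynomial.pderiv (Sum.inr j) P)) * δ j)
        + (substY Q (fun j => h j + δ j) - substY Q h
          - ∑ j, MvPowerSeries.C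
              (MvPolynomial.eval (0 : Fin n ⊕ Fin p → K)
                (MvPolynomial.pderiv (Sum.inr j) Q)) * δ j) := by
      simp only [substY, map_add, add_mul, Finset.sum_add_distrib]
      ring
    rw [this]
    exact (Idl K d).add_mem hP hQ
  | mul_X P s hP =>
    set h' : Fin p → MvPowerSeries (Fin n) K := fun j => h j + δ j with hh'
    set S : MvPowerSeries (Fin n) K := ∑ j, MvPowerSeries.C
      (MvPolynomial.eval (0 : Fin n ⊕ Fin p → K) (MvPolynomial.pderiv (Sum.inr j) P)) * δ j
      with hS
    have hSb : Below d S := by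
      intro e he hne
      rw [hS, map_sum]
      apply Finset.sum_eq_zero
      intro j _
      rw [MvPowerSeries.coeff_C_mul, hδ j e he hne, mul_zero]
    have hh'0 : ∀ j, MvPowerSeries.constantCoeff (h' j) = 0 := by
      intro j
      rw [hh', map_add, hh j, below_zero_coeff hd (hδ j), add_zero]
    cases s with
    | inl i =>
      have hder : ∀ k : Fin p,
          MvPolynomial.eval (0 : Fin n ⊕ Fin p → K)
            (MvPolynomial.pderiv (Sum.inr k) (P * MvPolynomial.X (Sum.inl i))) = 0 := by
        intro k
        simp [MvPolynomial.pderiv_mul, MvPolynomial.pderiv_X, Pi.single_apply]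
      have hrw : substY (P * MvPolynomial.X (Sum.inl i)) h' - substY (P * MvPolynomial.X (Sum.inl i)) h
          - ∑ j, MvPowerSeries.C
              (MvPolynomial.eval (0 : Fin n ⊕ Fin p → K)
                (MvPolynomial.pderiv (Sum.inr j) (P * MvPolynomial.X (Sum.inl i)))) * δ j
          = (substY P h' - substY P h - S) * MvPowerSeries.X i + S * MvPowerSeries.X i := by
        simp only [substY, map_mul, MvPolynomial.aeval_X, Sum.elim_inl]
        rw [Finset.sum_congr rfl (fun j _ => by rw [hder j, map_zero, zero_mul])]
        rw [Finset.sum_const_zero]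
        ring
      rw [hrw]
      exact (Idl K d).add_mem (Ideal.mul_mem_right _ _ hP)
        (below_mul_mem_Idl hSb (MvPowerSeries.constantCoeff_X i))
    | inr i =>
      have hder : ∀ k : Fin p,
          MvPolynomial.eval (0 : Fin n ⊕ Fin p → K)
            (MvPolynomial.pderiv (Sum.inr k) (P * MvPolynomial.X (Sum.inr i)))
          = MvPolynomial.eval (0 : Fin n ⊕ Fin p → K) P * (if i = k then 1 else 0) := by
        intro k
        by_cases hik : i = k
        · subst hik
          simp [MvPolynomial.pderiv_mul, MvPolynomial.pderiv_X, Pi.single_apply]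
        · simp [MvPolynomial.pderiv_mul, MvPolynomial.pderiv_X, Pi.single_apply, hik,
            Ne.symm hik]
      have hsum : ∑ j, MvPowerSeries.C
              (MvPolynomial.eval (0 : Fin n ⊕ Fin p → K)
                (MvPolynomial.pderiv (Sum.inr j) (P * MvPolynomial.X (Sum.inr i)))) * δ j
          = MvPowerSeries.C (MvPolynomial.eval (0 : Fin n ⊕ Fin p → K) P) * δ i := by
        rw [Finset.sum_congr rfl (fun j _ => by rw [hder j])]
        rw [Finset.sum_eq_single i]
        · simp
        · intro b _ hb
          rw [if_neg (fun hc => hb hc.symm), mul_zero, map_zero, zero_mul]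
        · intro habs; exact absurd (Finset.mem_univ i) habs
      have hrw : substY (P * MvPolynomial.X (Sum.inr i)) h' - substY (P * MvPolynomial.X (Sum.inr i)) h
          - ∑ j, MvPowerSeries.C
              (MvPolynomial.eval (0 : Fin n ⊕ Fin p → K)
                (MvPolynomial.pderiv (Sum.inr j) (P * MvPolynomial.X (Sum.inr i)))) * δ j
          = (substY P h' - substY P h - S) * h i + S * h i
            + (substY P h'
              - MvPowerSeries.C (MvPolynomial.eval (0 : Fin n ⊕ Fin p → K) P)) * δ i := by
        rw [hsum]
        simp only [substY, map_mul, MvPolynomial.aeval_X, Sum.elim_inr]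
        simp only [hh']
        ring
      rw [hrw]
      refine (Idl K d).add_mem ((Idl K d).add_mem (Ideal.mul_mem_right _ _ hP)
        (below_mul_mem_Idl hSb (hh i))) ?_
      apply mul_below_mem_Idl _ (hδ i)
      rw [map_sub, constantCoeff_substY P hh'0]
      simp

/-- coefficient form of the linearization lemma -/
lemma coeff_substY_linearize {d : Fin n →₀ ℕ} (hd : d ≠ 0)
    {h δ : Fin p → MvPowerSeries (Fin n) K}
    (hh : ∀ j, MvPowerSeries.constantCoeff (h j) = 0)
    (hδ : ∀ j, Below d (δ j)) (P : MvPolynomial (Fin n ⊕ Fin p) K) :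
    MvPowerSeries.coeff d (substY P (fun j => h j + δ j))
      = MvPowerSeries.coeff d (substY P h)
        + ∑ j, MvPolynomial.eval (0 : Fin n ⊕ Fin p → K) (MvPolynomial.pderiv (Sum.inr j) P)
            * MvPowerSeries.coeff d (δ j) := by
  have h1 := substY_linearize hd hh hδ P d le_rfl
  simp only [map_sub, map_sum, MvPowerSeries.coeff_C_mul] at h1
  linear_combination h1

/-- Newton-type iteration -/
noncomputable def approx (H : Fin p → MvPolynomial (Fin n ⊕ Fin p) K)
    (B : Matrix (Fin p) (Fin p) K) : ℕ → Fin p → MvPowerSeries (Fin n) K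
  | 0 => 0
  | N + 1 => fun j => approx H B N j
      - ∑ i, MvPowerSeries.C (B j i) * substY (H i) (approx H B N)

variable (H : Fin p → MvPolynomial (Fin n ⊕ Fin p) K) (B : Matrix (Fin p) (Fin p) K)

lemma approx_claim
    (h0 : ∀ i, MvPolynomial.eval (0 : Fin n ⊕ Fin p → K) (H i) = 0)
    (hMB : (Matrix.of fun i j : Fin p =>
        MvPolynomial.eval (0 : Fin n ⊕ Fin p → K) (MvPolynomial.pderiv (Sum.inr j) (H i))) * B
        = 1) (N : ℕ) :
    (∀ j, MvPowerSeries.constantCoeff (approx H B N j) = 0) ∧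
      (∀ i (d : Fin n →₀ ℕ), deg d ≤ N →
        MvPowerSeries.coeff d (substY (H i) (approx H B N)) = 0) := by
  induction N with
  | zero =>
    constructor
    · intro j; simp [approx]
    · intro i d hd
      have hd0 : d = 0 := eq_zero_of_deg_eq_zero (Nat.le_zero.mp hd)
      subst hd0
      rw [MvPowerSeries.coeff_zero_eq_constantCoeff,
        constantCoeff_substY (H i) (fun j => by simp [approx])]
      exact h0 i
  | succ N ih =>
    obtain ⟨c, z⟩ := ih
    have hδeq : ∀ j, approx H B (N + 1) j - approx H B N j
        = -∑ i, MvPowerSeries.C (B j i) * substY (H i) (approx H B N) := by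
      intro j
      show approx H B N j - (∑ i, MvPowerSeries.C (B j i)
          * substY (H i) (approx H B N)) - approx H B N j = _
      ring
    have hδc : ∀ j (e : Fin n →₀ ℕ),
        MvPowerSeries.coeff e (approx H B (N + 1) j - approx H B N j)
          = -∑ i, B j i * MvPowerSeries.coeff e (substY (H i) (approx H B N)) := by
      intro j e
      rw [hδeq j, map_neg, map_sum]
      simp only [MvPowerSeries.coeff_C_mul]
    have hδz : ∀ j (e : Fin n →₀ ℕ), deg e ≤ N →
        MvPowerSeries.coeff e (approx H B (N + 1) j - approx H B N j) = 0 := by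
      intro j e he
      rw [hδc j e]
      rw [Finset.sum_congr rfl fun i _ => by rw [z i e he, mul_zero]]
      simp
    have c' : ∀ j, MvPowerSeries.constantCoeff (approx H B (N + 1) j) = 0 := by
      intro j
      have h00 := hδz j 0 (by rw [deg_zero]; omega)
      rw [map_sub, sub_eq_zero] at h00
      rw [← MvPowerSeries.coeff_zero_eq_constantCoeff, h00,
        MvPowerSeries.coeff_zero_eq_constantCoeff, c j]
    refine ⟨c', ?_⟩
    intro i d hd
    by_cases hd0 : d = 0
    · subst hd0
      rw [MvPowerSeries.coeff_zero_eq_constantCoeff, constantCoeff_substY (H i) c']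
      exact h0 i
    · have hbel : ∀ j, Below d (approx H B (N + 1) j - approx H B N j) := by
        intro j e he hne
        exact hδz j e (by have := deg_strict he hne; omega)
      have hlin := coeff_substY_linearize hd0 c hbel (H i)
      have hfun : (fun j => approx H B N j + (approx H B (N + 1) j - approx H B N j))
          = approx H B (N + 1) := by funext j; ring
      rw [hfun] at hlin
      rw [hlin]
      set u : Fin p → K := fun k => MvPowerSeries.coeff d (substY (H k) (approx H B N))
        with hu
      have h2 : ∀ j, MvPowerSeries.coeff d (approx H B (N + 1) j - approx H B N j)
          = (-(B.mulVec u)) j := by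
        intro j
        rw [hδc j d]
        simp [Matrix.mulVec, dotProduct, hu]
      rw [Finset.sum_congr rfl fun j _ => by rw [h2 j]]
      have h3 : ∑ j, MvPolynomial.eval (0 : Fin n ⊕ Fin p → K)
            (MvPolynomial.pderiv (Sum.inr j) (H i)) * (-(B.mulVec u)) j
          = ((Matrix.of fun i j : Fin p => MvPolynomial.eval (0 : Fin n ⊕ Fin p → K)
              (MvPolynomial.pderiv (Sum.inr j) (H i))).mulVec (-(B.mulVec u))) i := by
        simp [Matrix.mulVec, dotProduct]
      rw [h3, Matrix.mulVec_neg, Matrix.mulVec_mulVec, hMB, Matrix.one_mulVec]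
      simp [hu]

lemma approx_stab
    (h0 : ∀ i, MvPolynomial.eval (0 : Fin n ⊕ Fin p → K) (H i) = 0)
    (hMB : (Matrix.of fun i j : Fin p =>
        MvPolynomial.eval (0 : Fin n ⊕ Fin p → K) (MvPolynomial.pderiv (Sum.inr j) (H i))) * B
        = 1) (d : Fin n →₀ ℕ) (M N : ℕ) (hdM : deg d ≤ M) (hMN : M ≤ N) (j : Fin p) :
    MvPowerSeries.coeff d (approx H B N j) = MvPowerSeries.coeff d (approx H B M j) := by
  induction N, hMN using Nat.le_induction with
  | base => rfl
  | succ N hMN ih =>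
    have hz := (approx_claim H B h0 hMB N).2
    have hstep : MvPowerSeries.coeff d (approx H B (N + 1) j)
        = MvPowerSeries.coeff d (approx H B N j) := by
      have heq : approx H B (N + 1) j = approx H B N j
          - ∑ i, MvPowerSeries.C (B j i) * substY (H i) (approx H B N) := rfl
      rw [heq, map_sub, map_sum]
      rw [Finset.sum_congr rfl fun i _ => by
        rw [MvPowerSeries.coeff_C_mul, hz i d (hdM.trans hMN), mul_zero]]
      simp
    rw [hstep, ih]

/-- The limit of the iteration : the solution power series. -/
noncomputable def limitFun : Fin p → MvPowerSeries (Fin n) K :=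
  fun j d => MvPowerSeries.coeff d (approx H B (deg d) j)

lemma coeff_limitFun (j : Fin p) (d : Fin n →₀ ℕ) :
    MvPowerSeries.coeff d (limitFun H B j)
      = MvPowerSeries.coeff d (approx H B (deg d) j) := rfl

lemma limit_const : ∀ j, MvPowerSeries.constantCoeff (limitFun H B j) = 0 := by
  intro j
  rw [← MvPowerSeries.coeff_zero_eq_constantCoeff, coeff_limitFun, deg_zero]
  simp [approx]

lemma limit_subst
    (h0 : ∀ i, MvPolynomial.eval (0 : Fin n ⊕ Fin p → K) (H i) = 0)
    (hMB : (Matrix.of fun i j : Fin p =>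
        MvPolynomial.eval (0 : Fin n ⊕ Fin p → K) (MvPolynomial.pderiv (Sum.inr j) (H i))) * B
        = 1) : ∀ i, substY (H i) (limitFun H B) = 0 := by
  intro i
  apply MvPowerSeries.ext
  intro d
  rw [map_zero]
  have hmem : ∀ j, limitFun H B j - approx H B (deg d) j ∈ Idl K d := by
    intro j e he
    rw [map_sub, coeff_limitFun,
      approx_stab H B h0 hMB e (deg e) (deg d) le_rfl (deg_mono he) j, sub_self]
  have hcong := substY_congr_mem_Idl hmem (H i) d le_rfl
  rw [map_sub, sub_eq_zero] at hcong
  rw [hcong]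
  exact (approx_claim H B h0 hMB (deg d)).2 i d le_rfl

lemma unique_aux
    (hBM : B * (Matrix.of fun i j : Fin p =>
        MvPolynomial.eval (0 : Fin n ⊕ Fin p → K) (MvPolynomial.pderiv (Sum.inr j) (H i))) = 1)
    (h1 h2 : Fin p → MvPowerSeries (Fin n) K)
    (hc1 : ∀ j, MvPowerSeries.constantCoeff (h1 j) = 0)
    (hs1 : ∀ i, substY (H i) h1 = 0)
    (hc2 : ∀ j, MvPowerSeries.constantCoeff (h2 j) = 0)
    (hs2 : ∀ i, substY (H i) h2 = 0) : h1 = h2 := by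
  have key : ∀ N (d : Fin n →₀ ℕ), deg d ≤ N → ∀ j,
      MvPowerSeries.coeff d (h1 j) = MvPowerSeries.coeff d (h2 j) := by
    intro N
    induction N with
    | zero =>
      intro d hd j
      have hd0 : d = 0 := eq_zero_of_deg_eq_zero (Nat.le_zero.mp hd)
      subst hd0
      rw [MvPowerSeries.coeff_zero_eq_constantCoeff, hc1 j, hc2 j]
    | succ N ih =>
      intro d hd j
      by_cases hd0 : d = 0
      · subst hd0
        rw [MvPowerSeries.coeff_zero_eq_constantCoeff, hc1 j, hc2 j]
      · have hbel : ∀ k, Below d (h2 k - h1 k) := by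
          intro k e he hne
          rw [map_sub, ih e (by have := deg_strict he hne; omega) k, sub_self]
        have hvec : (Matrix.of fun i j : Fin p => MvPolynomial.eval (0 : Fin n ⊕ Fin p → K)
            (MvPolynomial.pderiv (Sum.inr j) (H i))).mulVec
            (fun k => MvPowerSeries.coeff d (h2 k - h1 k)) = 0 := by
          funext i
          have hlin := coeff_substY_linearize hd0 hc1 hbel (H i)
          have hfun : (fun k => h1 k + (h2 k - h1 k)) = h2 := by funext k; ring
          rw [hfun, hs2 i, hs1 i, map_zero, zero_add] at hlin
          simp only [Pi.zero_apply, Matrix.mulVec, dotProduct, Matrix.of_apply]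
          exact hlin.symm
        have h4 : B.mulVec ((Matrix.of fun i j : Fin p =>
            MvPolynomial.eval (0 : Fin n ⊕ Fin p → K)
            (MvPolynomial.pderiv (Sum.inr j) (H i))).mulVec
            (fun k => MvPowerSeries.coeff d (h2 k - h1 k))) = B.mulVec 0 := by
          rw [hvec]
        rw [Matrix.mulVec_mulVec, hBM, Matrix.one_mulVec, Matrix.mulVec_zero] at h4
        have h5 := congrFun h4 j
        simp only [Pi.zero_apply, map_sub] at h5
        exact (sub_eq_zero.mp h5).symm
  funext j
  apply MvPowerSeries.ext
  intro d
  exact key (deg d) d le_rfl j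

end FIFaux

/-- Formal implicit function theorem. -/
theorem formal_implicit_function (H : Fin p → MvPolynomial (Fin n ⊕ Fin p) K)
    (hmc : IsMotherCode H) :
    ∃! h : Fin p → MvPowerSeries (Fin n) K,
      (∀ i, MvPowerSeries.constantCoeff (h i) = 0) ∧
      (∀ i, substY (H i) h = 0) := by
  classical
  have h0 : ∀ i, MvPolynomial.eval (0 : Fin n ⊕ Fin p → K) (H i) = 0 := hmc.1
  have hU : IsUnit (Matrix.of fun i j : Fin p =>
      MvPolynomial.eval (0 : Fin n ⊕ Fin p → K) (MvPolynomial.pderiv (Sum.inr j) (H i))) := hmc.2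
  set M : Matrix (Fin p) (Fin p) K := Matrix.of fun i j : Fin p =>
    MvPolynomial.eval (0 : Fin n ⊕ Fin p → K) (MvPolynomial.pderiv (Sum.inr j) (H i)) with hM
  have hdet : IsUnit M.det := (Matrix.isUnit_iff_isUnit_det M).mp hU
  have hMB : M * M⁻¹ = 1 := Matrix.mul_nonsing_inv M hdet
  have hBM : M⁻¹ * M = 1 := Matrix.nonsing_inv_mul M hdet
  refine ⟨FIFaux.limitFun H M⁻¹, ⟨FIFaux.limit_const H M⁻¹,
    FIFaux.limit_subst H M⁻¹ h0 hMB⟩, ?_⟩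
  intro h' hh'
  exact FIFaux.unique_aux H M⁻¹ hBM h' (FIFaux.limitFun H M⁻¹) hh'.1 hh'.2
    (FIFaux.limit_const H M⁻¹) (FIFaux.limit_subst H M⁻¹ h0 hMB)
end

section
/- Let K be a field, H = (H₁,…,H_p) ∈ K[x,y]^p a mother code with baby series vector h = (h₁,…,h_p) ∈ K[[x]]^p. Then in the formal power series ring K[[x₁,…,xₙ,y₁,…,y_p]], the ideal generated by H₁,…,H_p equals the ideal generated by y₁ − h₁, …, y_p − h_p. -/
variable {K : Type*} [Field K] {n p : ℕ}

open scoped Classical in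
/-- The natural inclusion `K[[x]] → K[[x,y]]`. -/
noncomputable def inclPS (f : MvPowerSeries (Fin n) K) :
    MvPowerSeries (Fin n ⊕ Fin p) K :=
  fun e =>
    if ∀ j : Fin p, e (Sum.inr j) = 0 then
      MvPowerSeries.coeff (Finsupp.comapDomain Sum.inl e Sum.inl_injective.injOn) f
    else 0

namespace MotherAux

open MvPowerSeries

lemma coeff_inclPS_pos (f : MvPowerSeries (Fin n) K) (e : (Fin n ⊕ Fin p) →₀ ℕ)
    (he : ∀ j : Fin p, e (Sum.inr j) = 0) :
    MvPowerSeries.coeff e (inclPS f) =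
      MvPowerSeries.coeff (Finsupp.comapDomain Sum.inl e Sum.inl_injective.injOn) f := by
  rw [MvPowerSeries.coeff_apply, inclPS, if_pos he]

lemma coeff_inclPS_neg (f : MvPowerSeries (Fin n) K) (e : (Fin n ⊕ Fin p) →₀ ℕ)
    (he : ¬ ∀ j : Fin p, e (Sum.inr j) = 0) :
    MvPowerSeries.coeff e (inclPS f) = 0 := by
  rw [MvPowerSeries.coeff_apply, inclPS, if_neg he]

lemma comap_mapDomain (c : Fin n →₀ ℕ) :
    Finsupp.comapDomain Sum.inl (Finsupp.mapDomain (Sum.inl : Fin n → Fin n ⊕ Fin p) c)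
      Sum.inl_injective.injOn = c := by
  ext a
  rw [Finsupp.comapDomain_apply, Finsupp.mapDomain_apply Sum.inl_injective]

lemma mapDomain_inr_zero (c : Fin n →₀ ℕ) (j : Fin p) :
    Finsupp.mapDomain (Sum.inl : Fin n → Fin n ⊕ Fin p) c (Sum.inr j) = 0 :=
  Finsupp.mapDomain_notin_range c _ (by simp)

lemma mapDomain_comap (e : (Fin n ⊕ Fin p) →₀ ℕ) (he : ∀ j : Fin p, e (Sum.inr j) = 0) :
    Finsupp.mapDomain Sum.inl (Finsupp.comapDomain Sum.inl e Sum.inl_injective.injOn) = e := by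
  refine Finsupp.mapDomain_comapDomain _ Sum.inl_injective e ?_
  intro x hx
  rcases x with s | j
  · exact ⟨s, rfl⟩
  · exact absurd (he j) (Finsupp.mem_support_iff.mp hx)

lemma coeff_inclPS_mapDomain (f : MvPowerSeries (Fin n) K) (c : Fin n →₀ ℕ) :
    MvPowerSeries.coeff (Finsupp.mapDomain (Sum.inl : Fin n → Fin n ⊕ Fin p) c) (inclPS f) =
      MvPowerSeries.coeff c f := by
  rw [coeff_inclPS_pos _ _ (mapDomain_inr_zero c), comap_mapDomain]

lemma inclPS_monomial (d : Fin n →₀ ℕ) (a : K) :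
    (inclPS (MvPowerSeries.monomial d a) : MvPowerSeries (Fin n ⊕ Fin p) K) =
      MvPowerSeries.monomial (Finsupp.mapDomain Sum.inl d) a := by
  classical
  ext e
  by_cases he : ∀ j : Fin p, e (Sum.inr j) = 0
  · rw [coeff_inclPS_pos _ _ he, MvPowerSeries.coeff_monomial, MvPowerSeries.coeff_monomial]
    congr 1
    simp only [eq_iff_iff]
    constructor
    · intro hc
      rw [← mapDomain_comap e he, hc]
    · intro hc
      rw [hc, comap_mapDomain]
  · rw [coeff_inclPS_neg _ _ he, MvPowerSeries.coeff_monomial, if_neg]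
    push_neg at he
    obtain ⟨j, hj⟩ := he
    intro hc
    exact hj (hc ▸ mapDomain_inr_zero d j)

lemma inclPS_C (a : K) :
    (inclPS (MvPowerSeries.C (σ := Fin n) (R := K) a) : MvPowerSeries (Fin n ⊕ Fin p) K) =
      MvPowerSeries.C (σ := Fin n ⊕ Fin p) (R := K) a := by
  rw [← MvPowerSeries.monomial_zero_eq_C, inclPS_monomial, Finsupp.mapDomain_zero,
    MvPowerSeries.monomial_zero_eq_C]

lemma inclPS_zero : (inclPS (0 : MvPowerSeries (Fin n) K) : MvPowerSeries (Fin n ⊕ Fin p) K) = 0 := by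
  ext e
  by_cases he : ∀ j : Fin p, e (Sum.inr j) = 0
  · rw [coeff_inclPS_pos _ _ he]; simp
  · rw [coeff_inclPS_neg _ _ he]; simp

lemma inclPS_add (f g : MvPowerSeries (Fin n) K) :
    (inclPS (f + g) : MvPowerSeries (Fin n ⊕ Fin p) K) = inclPS f + inclPS g := by
  ext e
  by_cases he : ∀ j : Fin p, e (Sum.inr j) = 0
  · rw [map_add, coeff_inclPS_pos _ _ he, coeff_inclPS_pos _ _ he, coeff_inclPS_pos _ _ he,
      map_add]
  · rw [map_add, coeff_inclPS_neg _ _ he, coeff_inclPS_neg _ _ he, coeff_inclPS_neg _ _ he,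
      add_zero]

lemma inclPS_X (j : Fin n) :
    (inclPS (MvPowerSeries.X j : MvPowerSeries (Fin n) K) : MvPowerSeries (Fin n ⊕ Fin p) K) =
      MvPowerSeries.X (Sum.inl j) := by
  rw [MvPowerSeries.X, inclPS_monomial, Finsupp.mapDomain_single, MvPowerSeries.X]

lemma inclPS_mul (f g : MvPowerSeries (Fin n) K) :
    (inclPS (f * g) : MvPowerSeries (Fin n ⊕ Fin p) K) = inclPS f * inclPS g := by
  classical
  ext e
  by_cases he : ∀ j : Fin p, e (Sum.inr j) = 0
  · rw [coeff_inclPS_pos _ _ he, MvPowerSeries.coeff_mul, MvPowerSeries.coeff_mul]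
    refine Finset.sum_bij'
      (fun cd _ => (Finsupp.mapDomain Sum.inl cd.1, Finsupp.mapDomain Sum.inl cd.2))
      (fun ab _ => (Finsupp.comapDomain Sum.inl ab.1 Sum.inl_injective.injOn,
        Finsupp.comapDomain Sum.inl ab.2 Sum.inl_injective.injOn)) ?_ ?_ ?_ ?_ ?_
    · rintro ⟨c, d⟩ hcd
      rw [Finset.HasAntidiagonal.mem_antidiagonal] at hcd ⊢
      rw [← Finsupp.mapDomain_add, hcd, mapDomain_comap e he]
    · rintro ⟨a, b⟩ hab
      rw [Finset.HasAntidiagonal.mem_antidiagonal] at hab ⊢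
      ext s
      simp only [Finsupp.add_apply, Finsupp.comapDomain_apply, ← hab]
    · rintro ⟨c, d⟩ _
      simp only [comap_mapDomain]
    · rintro ⟨a, b⟩ hab
      rw [Finset.HasAntidiagonal.mem_antidiagonal] at hab
      have ha : ∀ j : Fin p, a (Sum.inr j) = 0 := by
        intro j
        have := he j
        rw [← hab] at this
        simp only [Finsupp.coe_add, Pi.add_apply] at this
        omega
      have hb : ∀ j : Fin p, b (Sum.inr j) = 0 := by
        intro j
        have := he j
        rw [← hab] at this
        simp only [Finsupp.coe_add, Pi.add_apply] at this
        omega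
      simp only [Prod.mk.injEq]
      exact ⟨mapDomain_comap a ha, mapDomain_comap b hb⟩
    · rintro ⟨c, d⟩ _
      rw [coeff_inclPS_mapDomain, coeff_inclPS_mapDomain]
  · rw [coeff_inclPS_neg _ _ he, MvPowerSeries.coeff_mul]
    symm
    refine Finset.sum_eq_zero ?_
    rintro ⟨a, b⟩ hab
    rw [Finset.HasAntidiagonal.mem_antidiagonal] at hab
    push_neg at he
    obtain ⟨j, hj⟩ := he
    rw [← hab] at hj
    simp only [Finsupp.coe_add, Pi.add_apply] at hj
    by_cases haj : a (Sum.inr j) = 0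
    · have hbj : ¬ ∀ j', b (Sum.inr j') = 0 := fun hb => hj (by simp [haj, hb j])
      rw [coeff_inclPS_neg _ _ hbj, mul_zero]
    · have haj' : ¬ ∀ j', a (Sum.inr j') = 0 := fun ha => haj (ha j)
      rw [coeff_inclPS_neg _ _ haj', zero_mul]

lemma constantCoeff_inclPS (f : MvPowerSeries (Fin n) K) :
    MvPowerSeries.constantCoeff (σ := Fin n ⊕ Fin p) (R := K) (inclPS f) =
      MvPowerSeries.constantCoeff (σ := Fin n) (R := K) f := by
  rw [← MvPowerSeries.coeff_zero_eq_constantCoeff, ← MvPowerSeries.coeff_zero_eq_constantCoeff,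
    coeff_inclPS_pos _ _ (fun j => rfl)]
  congr 1
  ext a
  simp [Finsupp.comapDomain_apply]

lemma constantCoeff_substY (h : Fin p → MvPowerSeries (Fin n) K)
    (h0 : ∀ i, MvPowerSeries.constantCoeff (σ := Fin n) (R := K) (h i) = 0)
    (P : MvPolynomial (Fin n ⊕ Fin p) K) :
    MvPowerSeries.constantCoeff (σ := Fin n) (R := K) (substY P h) =
      MvPolynomial.eval (0 : Fin n ⊕ Fin p → K) P := by
  have : (MvPowerSeries.constantCoeff (σ := Fin n) (R := K)).comp
      (MvPolynomial.aeval (R := K) (Sum.elim (fun j => (MvPowerSeries.X j : MvPowerSeries (Fin n) K)) h)).toRingHom =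
      MvPolynomial.eval (0 : Fin n ⊕ Fin p → K) := by
    apply MvPolynomial.ringHom_ext
    · intro r
      simp [MvPowerSeries.algebraMap_apply]
    · intro s
      rcases s with s | j <;>
        simp [h0, MvPowerSeries.constantCoeff_X]
  exact RingHom.congr_fun this P

end MotherAux

namespace MotherAux

open MvPowerSeries

lemma taylor_key (h : Fin p → MvPowerSeries (Fin n) K)
    (h0 : ∀ i, MvPowerSeries.constantCoeff (σ := Fin n) (R := K) (h i) = 0)
    (P : MvPolynomial (Fin n ⊕ Fin p) K) :
    ∃ g : Fin p → MvPowerSeries (Fin n ⊕ Fin p) K,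
      (∀ j, MvPowerSeries.constantCoeff (σ := Fin n ⊕ Fin p) (R := K) (g j) =
        MvPolynomial.eval (0 : Fin n ⊕ Fin p → K) (MvPolynomial.pderiv (Sum.inr j) P)) ∧
      (P : MvPowerSeries (Fin n ⊕ Fin p) K) =
        inclPS (substY P h) +
          ∑ j : Fin p, g j * (MvPowerSeries.X (Sum.inr j) - inclPS (h j)) := by
  classical
  induction P using MvPolynomial.induction_on with
  | C a =>
    refine ⟨0, fun j => by simp [MvPolynomial.pderiv_C], ?_⟩
    simp only [Pi.zero_apply, zero_mul, Finset.sum_const_zero, add_zero]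
    rw [MvPolynomial.coe_C, substY, MvPolynomial.aeval_C, MvPowerSeries.algebraMap_apply,
      Algebra.algebraMap_self_apply, inclPS_C]
  | add P Q hP hQ =>
    obtain ⟨gP, hgP1, hgP2⟩ := hP
    obtain ⟨gQ, hgQ1, hgQ2⟩ := hQ
    refine ⟨gP + gQ, fun j => by simp [hgP1 j, hgQ1 j], ?_⟩
    rw [MvPolynomial.coe_add, hgP2, hgQ2, substY, substY, substY, map_add, inclPS_add]
    simp only [Pi.add_apply, add_mul, Finset.sum_add_distrib]
    ring
  | mul_X P s hP =>
    obtain ⟨g, hg1, hg2⟩ := hP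
    have hsub : substY (P * MvPolynomial.X s) h = substY P h *
        (Sum.elim (fun j => (MvPowerSeries.X j : MvPowerSeries (Fin n) K)) h s) := by
      rw [substY, substY, map_mul, MvPolynomial.aeval_X]
    rcases s with t | t
    · refine ⟨fun j => g j * MvPowerSeries.X (Sum.inl t), fun j => ?_, ?_⟩
      · rw [map_mul, MvPowerSeries.constantCoeff_X, mul_zero]
        rw [MvPolynomial.pderiv_mul, MvPolynomial.pderiv_X]
        simp [Pi.single_apply]
      · rw [MvPolynomial.coe_mul, MvPolynomial.coe_X, hg2, hsub]
        simp only [Sum.elim_inl]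
        rw [inclPS_mul, inclPS_X]
        rw [add_mul, Finset.sum_mul]
        congr 1
        refine Finset.sum_congr rfl fun j _ => by ring
    · refine ⟨fun j => g j * MvPowerSeries.X (Sum.inr t) +
        (if j = t then inclPS (substY P h) else 0), fun j => ?_, ?_⟩
      · rw [map_add, map_mul, MvPowerSeries.constantCoeff_X, mul_zero, zero_add]
        rw [MvPolynomial.pderiv_mul, MvPolynomial.pderiv_X]
        rcases eq_or_ne j t with rfl | hjt
        · simp [constantCoeff_inclPS, constantCoeff_substY h h0 P]
        · simp [hjt, Pi.single_apply, (Sum.inr_injective.ne_iff).mpr hjt]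
      · rw [MvPolynomial.coe_mul, MvPolynomial.coe_X, hg2, hsub]
        simp only [Sum.elim_inr]
        rw [inclPS_mul]
        simp only [add_mul, ite_mul, zero_mul, Finset.sum_add_distrib,
          Finset.sum_ite_eq', Finset.mem_univ, if_true]
        have : ∑ j : Fin p, g j * MvPowerSeries.X (Sum.inr t) *
            (MvPowerSeries.X (Sum.inr j) - inclPS (h j)) =
            (∑ j : Fin p, g j * (MvPowerSeries.X (Sum.inr j) - inclPS (h j))) *
              MvPowerSeries.X (Sum.inr t) := by
          rw [Finset.sum_mul]
          exact Finset.sum_congr rfl fun j _ => by ring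
        rw [this]
        ring

end MotherAux

theorem mother_code_ideal_eq' (H : Fin p → MvPolynomial (Fin n ⊕ Fin p) K)
    (hmc : (∀ i, MvPolynomial.eval (0 : Fin n ⊕ Fin p → K) (H i) = 0) ∧
      IsUnit (Matrix.of fun i j : Fin p =>
        MvPolynomial.eval (0 : Fin n ⊕ Fin p → K) (MvPolynomial.pderiv (Sum.inr j) (H i))))
    (h : Fin p → MvPowerSeries (Fin n) K)
    (h0 : ∀ i, MvPowerSeries.constantCoeff (σ := Fin n) (R := K) (h i) = 0)
    (hH : ∀ i, substY (H i) h = 0) :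
    Ideal.span (Set.range fun i => ((H i : MvPolynomial (Fin n ⊕ Fin p) K) :
        MvPowerSeries (Fin n ⊕ Fin p) K)) =
    Ideal.span (Set.range fun i =>
      MvPowerSeries.X (Sum.inr i : Fin n ⊕ Fin p) - inclPS (h i)) := by
  classical
  choose g hg1 hg2 using fun i => MotherAux.taylor_key h h0 (H i)
  set Δ : Fin p → MvPowerSeries (Fin n ⊕ Fin p) K :=
    fun j => MvPowerSeries.X (Sum.inr j) - inclPS (h j) with hΔ
  have hrep : ∀ i, ((H i : MvPolynomial (Fin n ⊕ Fin p) K) :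
      MvPowerSeries (Fin n ⊕ Fin p) K) = ∑ j : Fin p, g i j * Δ j := by
    intro i
    rw [hg2 i, hH i, MotherAux.inclPS_zero, zero_add]
  set A : Matrix (Fin p) (Fin p) (MvPowerSeries (Fin n ⊕ Fin p) K) :=
    Matrix.of fun i j => g i j with hA
  have hdet : IsUnit A.det := by
    rw [MvPowerSeries.isUnit_iff_constantCoeff] at *
    rw [RingHom.map_det]
    have : (MvPowerSeries.constantCoeff (σ := Fin n ⊕ Fin p) (R := K)).mapMatrix A =
        Matrix.of fun i j : Fin p =>
          MvPolynomial.eval (0 : Fin n ⊕ Fin p → K) (MvPolynomial.pderiv (Sum.inr j) (H i)) := by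
      ext i j
      exact hg1 i j
    rw [this]
    exact (Matrix.isUnit_iff_isUnit_det _).mp hmc.2
  have hBA : A⁻¹ * A = 1 := Matrix.nonsing_inv_mul A hdet
  have hΔrep : ∀ j, Δ j = ∑ i : Fin p, A⁻¹ j i *
      ((H i : MvPolynomial (Fin n ⊕ Fin p) K) : MvPowerSeries (Fin n ⊕ Fin p) K) := by
    intro j
    calc Δ j = ∑ k : Fin p, (1 : Matrix (Fin p) (Fin p) (MvPowerSeries (Fin n ⊕ Fin p) K)) j k * Δ k := by
          simp [Matrix.one_apply, Finset.sum_ite_eq]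
      _ = ∑ k : Fin p, (∑ i : Fin p, A⁻¹ j i * A i k) * Δ k := by
          rw [← hBA]
          simp [Matrix.mul_apply]
      _ = ∑ i : Fin p, A⁻¹ j i * ∑ k : Fin p, A i k * Δ k := by
          simp only [Finset.sum_mul, Finset.mul_sum]
          rw [Finset.sum_comm]
          exact Finset.sum_congr rfl fun i _ => Finset.sum_congr rfl fun k _ => by ring
      _ = ∑ i : Fin p, A⁻¹ j i *
            ((H i : MvPolynomial (Fin n ⊕ Fin p) K) : MvPowerSeries (Fin n ⊕ Fin p) K) := by
          exact Finset.sum_congr rfl fun i _ => by rw [hrep i]; rfl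
  apply le_antisymm
  · rw [Ideal.span_le]
    rintro _ ⟨i, rfl⟩
    show ((H i : MvPolynomial (Fin n ⊕ Fin p) K) : MvPowerSeries (Fin n ⊕ Fin p) K) ∈ _
    rw [hrep i]
    exact Ideal.sum_mem _ fun j _ =>
      Ideal.mul_mem_left _ _ (Ideal.subset_span ⟨j, rfl⟩)
  · rw [Ideal.span_le]
    rintro _ ⟨j, rfl⟩
    show Δ j ∈ _
    rw [hΔrep j]
    exact Ideal.sum_mem _ fun i _ =>
      Ideal.mul_mem_left _ _ (Ideal.subset_span ⟨i, rfl⟩)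

/-- The ideal of `K[[x,y]]` generated by the components of a mother code `H` equals the
ideal generated by `y₁ − h₁, …, y_p − h_p`, where `h` is the baby series vector of `H`. -/
theorem mother_code_ideal_eq (H : Fin p → MvPolynomial (Fin n ⊕ Fin p) K)
    (hmc : IsMotherCode H) (h : Fin p → MvPowerSeries (Fin n) K)
    (h0 : ∀ i, MvPowerSeries.constantCoeff (h i) = 0)
    (hH : ∀ i, substY (H i) h = 0) :
    Ideal.span (Set.range fun i => ((H i : MvPolynomial (Fin n ⊕ Fin p) K) :
        MvPowerSeries (Fin n ⊕ Fin p) K)) =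
    Ideal.span (Set.range fun i =>
      MvPowerSeries.X (Sum.inr i : Fin n ⊕ Fin p) - inclPS (h i)) := by
  exact mother_code_ideal_eq' H hmc h h0 hH
end
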